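/- arXiv:1608.00997 — 16 statements merged into one kernel-verified Lean document; each statement's English description precedes it below -/
import Mathlib

section
/- Let Γ be an ordered abelian group, S ⊆ Γ, α ∈ Γ, and n ≥ 1. Then S is jammed in Γ if and only if the affine transform α + nS is jammed in Γ. -/
/-- A subset `S` of an ordered abelian group is jammed: it is nonempty, has no greatest
element, and for every nontrivial convex subgroup `Δ` there is `γ₀ ∈ S` such that every
`γ₁ ∈ S` with `γ₁ > γ₀` satisfies `γ₁ - γ₀ ∈ Δ`. -/
def IsJammed {Γ : Type*} [AddCommGroup Γ] [LinearOrder Γ] [IsOrderedAddMonoid Γ] (S : Set Γ) : Prop :=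
  S.Nonempty ∧ (¬ ∃ m ∈ S, ∀ x ∈ S, x ≤ m) ∧
    ∀ Δ : AddSubgroup Γ,
      (∀ a ∈ Δ, ∀ b ∈ Δ, ∀ c : Γ, a ≤ c → c ≤ b → c ∈ Δ) → Δ ≠ ⊥ →
      ∃ γ₀ ∈ S, ∀ γ₁ ∈ S, γ₀ < γ₁ → γ₁ - γ₀ ∈ Δ

/-- `S` is jammed in `Γ` iff the affine transform `α + nS` is jammed in `Γ`. -/
theorem stmt_1 {Γ : Type*} [AddCommGroup Γ] [LinearOrder Γ] [IsOrderedAddMonoid Γ]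
    (S : Set Γ) (α : Γ) (n : ℕ) (hn : 1 ≤ n) :
    IsJammed S ↔ IsJammed ((fun γ => α + n • γ) '' S) := by
  have hn0 : 0 < n := hn
  have hmono : StrictMono (fun γ : Γ => α + n • γ) := fun a b h => by
    dsimp only
    have : n • a < n • b := nsmul_lt_nsmul_right hn0.ne' h
    exact add_lt_add_right this α
  have hle : ∀ a b : Γ, (α + n • a ≤ α + n • b) ↔ a ≤ b := fun a b => hmono.le_iff_le
  constructor
  · rintro ⟨⟨s, hs⟩, hmax, hconv⟩
    refine ⟨⟨_, ⟨s, hs, rfl⟩⟩, ?_, ?_⟩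
    · rintro ⟨m, ⟨m₀, hm₀, rfl⟩, hub⟩
      apply hmax
      refine ⟨m₀, hm₀, fun x hx => ?_⟩
      exact (hle x m₀).mp (hub _ ⟨x, hx, rfl⟩)
    · intro Δ hΔconv hΔne
      obtain ⟨γ₀, hγ₀, hγ⟩ := hconv Δ hΔconv hΔne
      refine ⟨_, ⟨γ₀, hγ₀, rfl⟩, ?_⟩
      rintro _ ⟨γ₁, hγ₁, rfl⟩ hlt
      have h01 : γ₀ < γ₁ := by
        by_contra h
        exact absurd (hle γ₁ γ₀).mpr (fun h' => absurd (h' (not_lt.mp h)) (not_le.mpr hlt))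
      have hd : γ₁ - γ₀ ∈ Δ := hγ γ₁ hγ₁ h01
      have : (α + n • γ₁) - (α + n • γ₀) = n • (γ₁ - γ₀) := by
        rw [smul_sub]; abel
      rw [this]
      exact AddSubgroup.nsmul_mem Δ hd n
  · rintro ⟨⟨m, ⟨s, hs, rfl⟩⟩, hmax, hconv⟩
    refine ⟨⟨s, hs⟩, ?_, ?_⟩
    · rintro ⟨m₀, hm₀, hub⟩
      apply hmax
      refine ⟨_, ⟨m₀, hm₀, rfl⟩, ?_⟩
      rintro _ ⟨x, hx, rfl⟩
      exact (hle x m₀).mpr (hub x hx)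
    · intro Δ hΔconv hΔne
      obtain ⟨_, ⟨γ₀, hγ₀, rfl⟩, hγ⟩ := hconv Δ hΔconv hΔne
      refine ⟨γ₀, hγ₀, fun γ₁ hγ₁ h01 => ?_⟩
      have hlt : α + n • γ₀ < α + n • γ₁ := hmono h01
      have hd : (α + n • γ₁) - (α + n • γ₀) ∈ Δ := hγ _ ⟨γ₁, hγ₁, rfl⟩ hlt
      have heq : (α + n • γ₁) - (α + n • γ₀) = n • (γ₁ - γ₀) := by
        rw [smul_sub]; abel
      rw [heq] at hd
      have hd0 : (0 : Γ) ≤ γ₁ - γ₀ := sub_nonneg.mpr h01.le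
      have hdn : γ₁ - γ₀ ≤ n • (γ₁ - γ₀) := by
        calc γ₁ - γ₀ = 1 • (γ₁ - γ₀) := (one_nsmul _).symm
          _ ≤ n • (γ₁ - γ₀) := nsmul_le_nsmul_left hd0 hn
      exact hΔconv 0 Δ.zero_mem _ hd _ hd0 hdn
end

section
/- Let Γ and Γ₁ be ordered abelian groups with Γ an ordered subgroup of Γ₁ such that the set of archimedean classes [Γ] is coinitial in [Γ₁] (i.e., for every nonzero g ∈ Γ₁ there is a nonzero h ∈ Γ with [h] ≤ [g]). Then a subset S ⊆ Γ is jammed in Γ if and only if S is jammed in Γ₁. -/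
/-- Let `Γ` be an ordered subgroup of `Γ₁` (via an order embedding `f`) such
that the archimedean classes of `Γ` are coinitial in those of `Γ₁`: for every nonzero
`g ∈ Γ₁` there is a nonzero `h ∈ Γ` with `[f h] ≤ [g]`, i.e. `|f h| ≤ n|g|` for some
`n ≥ 1`. Then `S ⊆ Γ` is jammed in `Γ` iff (its image) is jammed in `Γ₁`. -/
theorem stmt_4 {Γ Γ₁ : Type*} [AddCommGroup Γ] [LinearOrder Γ] [IsOrderedAddMonoid Γ]
    [AddCommGroup Γ₁] [LinearOrder Γ₁] [IsOrderedAddMonoid Γ₁]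
    (f : Γ →+ Γ₁) (hf : ∀ x y : Γ, x ≤ y ↔ f x ≤ f y)
    (hcoin : ∀ g : Γ₁, g ≠ 0 → ∃ h : Γ, h ≠ 0 ∧ ∃ n : ℕ, 1 ≤ n ∧ |f h| ≤ n • |g|)
    (S : Set Γ) :
    IsJammed S ↔ IsJammed (f '' S) := by
  have hinj : Function.Injective f := fun x y h =>
    le_antisymm ((hf x y).2 h.le) ((hf y x).2 h.ge)
  have hmono : ∀ {x y : Γ}, x < y ↔ f x < f y := by
    intro x y
    constructor
    · intro h; exact lt_of_le_of_ne ((hf x y).1 h.le) fun he => h.ne (hinj he)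
    · intro h; exact lt_of_le_of_ne ((hf x y).2 h.le) fun he => h.ne (congrArg f he)
  have habs : ∀ x : Γ, |f x| = f |x| := by
    intro x
    rcases le_total 0 x with h | h
    · rw [abs_of_nonneg h, abs_of_nonneg]
      rw [← map_zero f]; exact (hf 0 x).1 h
    · rw [abs_of_nonpos h, abs_of_nonpos, map_neg]
      rw [← map_zero f]; exact (hf x 0).1 h
  constructor
  · rintro ⟨⟨s, hs⟩, hnomax, hΔ⟩
    refine ⟨⟨f s, s, hs, rfl⟩, ?_, ?_⟩
    · rintro ⟨m, ⟨m', hm', rfl⟩, hmax⟩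
      exact hnomax ⟨m', hm', fun x hx => (hf x m').2 (hmax _ ⟨x, hx, rfl⟩)⟩
    · intro Δ₁ hconv hne
      have habsmem1 : ∀ x ∈ Δ₁, |x| ∈ Δ₁ := by
        intro x hx
        rcases le_total 0 x with h | h
        · rwa [abs_of_nonneg h]
        · rw [abs_of_nonpos h]; exact Δ₁.neg_mem hx
      have habsorb : ∀ (c x : Γ₁), x ∈ Δ₁ → |c| ≤ |x| → c ∈ Δ₁ := by
        intro c x hx hle
        exact hconv (-|x|) (Δ₁.neg_mem (habsmem1 x hx)) (|x|) (habsmem1 x hx) c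
          (abs_le.1 hle).1 (abs_le.1 hle).2
      obtain ⟨g, hgmem, hg0⟩ : ∃ g ∈ Δ₁, g ≠ 0 := by
        by_contra h
        push_neg at h
        exact hne (by
          ext x
          simp only [AddSubgroup.mem_bot]
          exact ⟨fun hx => h x hx, fun hx => hx ▸ Δ₁.zero_mem⟩)
      obtain ⟨h0, hh0, n, hn1, hle⟩ := hcoin g hg0
      have hng : (n • |g| : Γ₁) ∈ Δ₁ := AddSubgroup.nsmul_mem Δ₁ (habsmem1 g hgmem) n
      have hfh0 : f h0 ∈ Δ₁ := by
        apply habsorb (f h0) (n • |g|) hng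
        rwa [abs_of_nonneg (nsmul_nonneg (abs_nonneg g) n)]
      set Δ : AddSubgroup Γ := Δ₁.comap f with hΔdef
      have hΔconv : ∀ a ∈ Δ, ∀ b ∈ Δ, ∀ c : Γ, a ≤ c → c ≤ b → c ∈ Δ := by
        intro a ha b hb c hac hcb
        exact hconv (f a) ha (f b) hb (f c) ((hf a c).1 hac) ((hf c b).1 hcb)
      have hΔne : Δ ≠ ⊥ := by
        intro hbot
        have : h0 ∈ Δ := hfh0
        rw [hbot, AddSubgroup.mem_bot] at this
        exact hh0 this
      obtain ⟨γ₀, hγ₀S, hγ₀⟩ := hΔ Δ hΔconv hΔne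
      refine ⟨f γ₀, ⟨γ₀, hγ₀S, rfl⟩, ?_⟩
      rintro _ ⟨γ₁, hγ₁S, rfl⟩ hlt
      have hmem : γ₁ - γ₀ ∈ Δ := hγ₀ γ₁ hγ₁S (hmono.2 hlt)
      simpa [hΔdef, AddSubgroup.mem_comap, map_sub] using hmem
  · rintro ⟨⟨_, s, hs, rfl⟩, hnomax, hΔ⟩
    refine ⟨⟨s, hs⟩, ?_, ?_⟩
    · rintro ⟨m, hm, hmax⟩
      exact hnomax ⟨f m, ⟨m, hm, rfl⟩, by rintro _ ⟨x, hx, rfl⟩; exact (hf x m).1 (hmax x hx)⟩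
    · intro Δ hconv hne
      have habsmem : ∀ x ∈ Δ, |x| ∈ Δ := by
        intro x hx
        rcases le_total 0 x with h | h
        · rwa [abs_of_nonneg h]
        · rw [abs_of_nonpos h]; exact Δ.neg_mem hx
      have hzabs : |(0:Γ)| = (0:Γ) := abs_zero
      set Δ₁ : AddSubgroup Γ₁ :=
        { carrier := {g : Γ₁ | ∃ d ∈ Δ, |g| ≤ f |d|}
          zero_mem' := ⟨0, Δ.zero_mem, by simp⟩
          add_mem' := by
            intro a b ha hb
            obtain ⟨d, hd, hda⟩ := ha
            obtain ⟨e, he, heb⟩ := hb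
            refine ⟨|d| + |e|, Δ.add_mem (habsmem d hd) (habsmem e he), ?_⟩
            have h1 : |a + b| ≤ |a| + |b| := abs_add_le a b
            have h2 : |a| + |b| ≤ f |d| + f |e| := add_le_add hda heb
            have h3 : abs (|d| + |e|) = |d| + |e| :=
              abs_of_nonneg (add_nonneg (abs_nonneg d) (abs_nonneg e))
            rw [h3, map_add]
            exact h1.trans h2
          neg_mem' := by
            intro a ha
            obtain ⟨d, hd, hda⟩ := ha
            exact ⟨d, hd, by rwa [abs_neg]⟩ } with hΔ₁def
      have hΔ₁conv : ∀ a ∈ Δ₁, ∀ b ∈ Δ₁, ∀ c : Γ₁, a ≤ c → c ≤ b → c ∈ Δ₁ := by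
        rintro a ⟨d, hd, hda⟩ b ⟨e, he, heb⟩ c hac hcb
        refine ⟨|d| + |e|, Δ.add_mem (habsmem d hd) (habsmem e he), ?_⟩
        have h1 : |c| ≤ max |a| |b| := abs_le_max_abs_abs hac hcb
        have h2 : max |a| |b| ≤ f |d| + f |e| := by
          apply max_le
          · exact hda.trans (le_add_of_nonneg_right (by
              rw [← map_zero f]; exact (hf 0 |e|).1 (abs_nonneg e)))
          · exact heb.trans (le_add_of_nonneg_left (by
              rw [← map_zero f]; exact (hf 0 |d|).1 (abs_nonneg d)))
        have h3 : abs (|d| + |e|) = |d| + |e| :=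
          abs_of_nonneg (add_nonneg (abs_nonneg d) (abs_nonneg e))
        rw [h3, map_add]
        exact h1.trans h2
      obtain ⟨d0, hd0mem, hd00⟩ : ∃ d ∈ Δ, d ≠ 0 := by
        by_contra h
        push_neg at h
        exact hne (by
          ext x
          simp only [AddSubgroup.mem_bot]
          exact ⟨fun hx => h x hx, fun hx => hx ▸ Δ.zero_mem⟩)
      have hΔ₁ne : Δ₁ ≠ ⊥ := by
        intro hbot
        have hmem : f d0 ∈ Δ₁ := ⟨d0, hd0mem, (habs d0).le⟩
        rw [hbot, AddSubgroup.mem_bot] at hmem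
        exact hd00 (hinj (by rw [hmem, map_zero]))
      obtain ⟨γ₀', hγ₀'S, hjam⟩ := hΔ Δ₁ hΔ₁conv hΔ₁ne
      obtain ⟨γ₀, hγ₀S, rfl⟩ := hγ₀'S
      refine ⟨γ₀, hγ₀S, ?_⟩
      intro γ₁ hγ₁ hlt
      obtain ⟨d, hd, hbound⟩ := hjam (f γ₁) ⟨γ₁, hγ₁, rfl⟩ (hmono.1 hlt)
      rw [← map_sub, habs] at hbound
      have hle : |γ₁ - γ₀| ≤ |d| := (hf _ _).2 hbound
      exact hconv (-|d|) (Δ.neg_mem (habsmem d hd)) (|d|) (habsmem d hd) (γ₁ - γ₀)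
        (abs_le.1 hle).1 (abs_le.1 hle).2
end

section
/- Let (Γ, ψ) be an asymptotic couple. Then the map γ ↦ γ′ := γ + ψ(γ) from Γ∖{0} to Γ is strictly increasing. In particular, (Γ^{<0})′ < (Γ^{>0})′ elementwise, and for each β ∈ Γ there is at most one α ∈ Γ∖{0} with α′ = β. -/
/-- In an asymptotic couple `(Γ, ψ)`, the map `γ ↦ γ' = γ + ψ γ` on
`Γ∖{0}` is strictly increasing; in particular `(Γ^{<0})' < (Γ^{>0})'` elementwise, and
for each `β` there is at most one nonzero `α` with `α' = β`. -/
theorem stmt_5 {Γ : Type*} [AddCommGroup Γ] [LinearOrder Γ] [IsOrderedAddMonoid Γ] (ψ : Γ → Γ)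
    (AC1 : ∀ α β : Γ, α ≠ 0 → β ≠ 0 → α + β ≠ 0 → min (ψ α) (ψ β) ≤ ψ (α + β))
    (AC2 : ∀ (α : Γ) (k : ℤ), α ≠ 0 → k ≠ 0 → ψ (k • α) = ψ α)
    (AC3 : ∀ α β : Γ, 0 < α → β ≠ 0 → ψ β < α + ψ α) :
    (∀ α β : Γ, α ≠ 0 → β ≠ 0 → α < β → α + ψ α < β + ψ β) ∧
    (∀ α β : Γ, α < 0 → 0 < β → α + ψ α < β + ψ β) ∧
    (∀ (β α₁ α₂ : Γ), α₁ ≠ 0 → α₂ ≠ 0 → α₁ + ψ α₁ = β → α₂ + ψ α₂ = β → α₁ = α₂) := by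
  have mono : ∀ α β : Γ, α ≠ 0 → β ≠ 0 → α < β → α + ψ α < β + ψ β := by
    intro α β hα hβ hlt
    set γ := β - α with hγdef
    have hγpos : 0 < γ := sub_pos.mpr hlt
    have hγ : γ ≠ 0 := ne_of_gt hγpos
    have hAC3 : ψ α < γ + ψ γ := AC3 γ α hγpos hα
    have key : ψ α < γ + ψ β := by
      have h1 : min (ψ α) (ψ γ) ≤ ψ (α + γ) := AC1 α γ hα hγ (by rw [hγdef]; simpa using hβ)
      rw [show α + γ = β by rw [hγdef]; abel] at h1
      rcases min_cases (ψ α) (ψ γ) with ⟨heq, _⟩ | ⟨heq, hle⟩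
      · rw [heq] at h1
        calc ψ α < γ + ψ α := lt_add_of_pos_left _ hγpos
          _ ≤ γ + ψ β := by gcongr
      · rw [heq] at h1
        calc ψ α < γ + ψ γ := hAC3
          _ ≤ γ + ψ β := by gcongr
    have : α + ψ α < α + (γ + ψ β) := by gcongr
    calc α + ψ α < α + (γ + ψ β) := this
      _ = β + ψ β := by rw [hγdef]; abel
  refine ⟨mono, fun α β hα hβ => mono α β (ne_of_lt hα) (ne_of_gt hβ) (hα.trans hβ), ?_⟩
  intro β α₁ α₂ h1 h2 e1 e2
  rcases lt_trichotomy α₁ α₂ with h | h | h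
  · exact absurd (e1.trans e2.symm) (ne_of_lt (mono _ _ h1 h2 h))
  · exact h
  · exact absurd (e2.trans e1.symm) (ne_of_lt (mono _ _ h2 h1 h))
end

section
/- Let (Γ, ψ) be an asymptotic couple with Ψ := ψ(Γ∖{0}) and (Γ^{>0})′ := {γ + ψ(γ) : γ ∈ Γ, γ > 0}. Then there is at most one β ∈ Γ with Ψ < β < (Γ^{>0})′ (elementwise). Moreover, if Ψ has a largest element, there is no such β. -/
/-- In an asymptotic couple `(Γ, ψ)` with `Ψ = ψ(Γ∖{0})`, there is at most
one `β` with `Ψ < β < (Γ^{>0})'` elementwise; and if `Ψ` has a largest element there is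
no such `β`. -/
theorem stmt_6 {Γ : Type*} [AddCommGroup Γ] [LinearOrder Γ] [IsOrderedAddMonoid Γ] (ψ : Γ → Γ)
    (AC1 : ∀ α β : Γ, α ≠ 0 → β ≠ 0 → α + β ≠ 0 → min (ψ α) (ψ β) ≤ ψ (α + β))
    (AC2 : ∀ (α : Γ) (k : ℤ), α ≠ 0 → k ≠ 0 → ψ (k • α) = ψ α)
    (AC3 : ∀ α β : Γ, 0 < α → β ≠ 0 → ψ β < α + ψ α) :
    (∀ β₁ β₂ : Γ,
      (∀ γ : Γ, γ ≠ 0 → ψ γ < β₁) → (∀ γ : Γ, 0 < γ → β₁ < γ + ψ γ) →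
      (∀ γ : Γ, γ ≠ 0 → ψ γ < β₂) → (∀ γ : Γ, 0 < γ → β₂ < γ + ψ γ) → β₁ = β₂) ∧
    ((∃ γ₀ : Γ, γ₀ ≠ 0 ∧ ∀ γ : Γ, γ ≠ 0 → ψ γ ≤ ψ γ₀) →
      ¬ ∃ β : Γ, (∀ γ : Γ, γ ≠ 0 → ψ γ < β) ∧ (∀ γ : Γ, 0 < γ → β < γ + ψ γ)) := by
  constructor
  · intro β₁ β₂ h₁l h₁u h₂l h₂u
    by_contra hne
    rcases lt_or_gt_of_ne hne with h | h
    · -- β₁ < β₂, take γ = β₂ - β₁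
      have hγ : (0:Γ) < β₂ - β₁ := sub_pos.mpr h
      have h1 := h₂u _ hγ
      have h2 := h₁l _ (ne_of_gt hγ)
      have h3 : β₂ - (β₂ - β₁) < ψ (β₂ - β₁) := sub_lt_iff_lt_add'.mpr h1
      rw [sub_sub_cancel] at h3
      exact absurd h3 (not_lt.mpr h2.le)
    · have hγ : (0:Γ) < β₁ - β₂ := sub_pos.mpr h
      have h1 := h₁u _ hγ
      have h2 := h₂l _ (ne_of_gt hγ)
      have h3 : β₁ - (β₁ - β₂) < ψ (β₁ - β₂) := sub_lt_iff_lt_add'.mpr h1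
      rw [sub_sub_cancel] at h3
      exact absurd h3 (not_lt.mpr h2.le)
  · rintro ⟨γ₀, hγ₀, hmax⟩ ⟨β, hl, hu⟩
    have hb : ψ γ₀ < β := hl _ hγ₀
    have hγ : (0:Γ) < β - ψ γ₀ := sub_pos.mpr hb
    have h1 := hu _ hγ
    have h2 := hmax _ (ne_of_gt hγ)
    have h3 : β - (β - ψ γ₀) < ψ (β - ψ γ₀) := sub_lt_iff_lt_add'.mpr h1
    rw [sub_sub_cancel] at h3
    exact absurd h3 (not_lt.mpr h2)
end

section
/- Let (Γ, ψ) be an H-asymptotic couple with asymptotic integration, with successor function s and integration map ∫. Then for all α, β ∈ Γ: (1) ∫α = α − s(α); (2) if s(α) < s(β) then ψ(β − α) = s(α); (3) β = ψ(α − β) if and only if β = s(α); (4) s(α) < s(s(α)). -/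
/-- Let `(Γ, ψ)` be an H-asymptotic couple with asymptotic integration,
with integration map `int` (`int α` is the unique nonzero `β` with `β + ψ β = α`) and
successor function `s α = ψ (int α)`. Then: (1) `∫α = α − s α`; (2) if `s α < s β` then
`ψ (β − α) = s α`; (3) for `α ≠ β`, `β = ψ (α − β)` iff `β = s α`; (4) `s α < s (s α)`. -/
theorem stmt_7 {Γ : Type*} [AddCommGroup Γ] [LinearOrder Γ] [IsOrderedAddMonoid Γ] (ψ : Γ → Γ)
    (AC1 : ∀ α β : Γ, α ≠ 0 → β ≠ 0 → α + β ≠ 0 → min (ψ α) (ψ β) ≤ ψ (α + β))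
    (AC2 : ∀ (α : Γ) (k : ℤ), α ≠ 0 → k ≠ 0 → ψ (k • α) = ψ α)
    (AC3 : ∀ α β : Γ, 0 < α → β ≠ 0 → ψ β < α + ψ α)
    (HC : ∀ α β : Γ, 0 < α → α ≤ β → ψ β ≤ ψ α)
    (int : Γ → Γ)
    (hint : ∀ α : Γ, int α ≠ 0 ∧ int α + ψ (int α) = α) :
    (∀ α : Γ, int α = α - ψ (int α)) ∧
    (∀ α β : Γ, ψ (int α) < ψ (int β) → ψ (β - α) = ψ (int α)) ∧
    (∀ α β : Γ, α ≠ β → (β = ψ (α - β) ↔ β = ψ (int α))) ∧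
    (∀ α : Γ, ψ (int α) < ψ (int (ψ (int α)))) := by
  -- ψ is symmetric
  have psneg : ∀ x : Γ, x ≠ 0 → ψ (-x) = ψ x := by
    intro x hx
    have := AC2 x (-1) hx (by norm_num)
    simpa using this
  -- reformulated AC1
  have AC1' : ∀ x y z : Γ, x ≠ 0 → y ≠ 0 → z ≠ 0 → x + y = z →
      min (ψ x) (ψ y) ≤ ψ z := by
    intro x y z hx hy hz hxyz
    have := AC1 x y hx hy (by rw [hxyz]; exact hz)
    rwa [hxyz] at this
  -- strict monotonicity of γ ↦ γ + ψ γ on nonzero elements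
  have mono : ∀ γ δ : Γ, γ ≠ 0 → δ ≠ 0 → γ < δ → γ + ψ γ < δ + ψ δ := by
    intro γ δ hγ hδ h
    rcases le_or_gt (ψ γ) (ψ δ) with hle | hlt
    · exact add_lt_add_of_lt_of_le h hle
    · have hdg : δ - γ ≠ 0 := sub_ne_zero.mpr (ne_of_gt h)
      have h1' : min (ψ (δ - γ)) (ψ γ) ≤ ψ δ :=
        AC1' (δ - γ) γ δ hdg hγ hδ (by abel)
      have h1 : ψ (δ - γ) ≤ ψ δ :=
        (min_le_iff.mp h1').resolve_right (not_le.mpr hlt)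
      have h3 : ψ γ < (δ - γ) + ψ (δ - γ) := AC3 (δ - γ) γ (sub_pos.mpr h) hγ
      calc γ + ψ γ < γ + ((δ - γ) + ψ (δ - γ)) := add_lt_add_right h3 γ
        _ ≤ γ + ((δ - γ) + ψ δ) := add_le_add_right (add_le_add_right h1 _) γ
        _ = δ + ψ δ := by abel
  -- injectivity of γ ↦ γ + ψ γ
  have inj : ∀ γ δ : Γ, γ ≠ 0 → δ ≠ 0 → γ + ψ γ = δ + ψ δ → γ = δ := by
    intro γ δ hγ hδ h
    rcases lt_trichotomy γ δ with hlt | heq | hlt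
    · exact absurd h (ne_of_lt (mono γ δ hγ hδ hlt))
    · exact heq
    · exact absurd h.symm (ne_of_lt (mono δ γ hδ hγ hlt))
  refine ⟨?_, ?_, ?_, ?_⟩
  · intro α
    exact eq_sub_of_add_eq (hint α).2
  · intro α β h
    obtain ⟨ha0, haeq⟩ := hint α
    obtain ⟨hb0, hbeq⟩ := hint β
    set a := int α with ha
    set b := int β with hb
    have hab : b - a ≠ 0 := by
      intro hc0
      rw [sub_eq_zero.mp hc0] at h
      exact lt_irrefl _ h
    set c := b - a with hc
    set d := ψ b - ψ a with hd
    -- ψ c = ψ a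
    have hca : ψ c = ψ a := by
      have h1' : min (ψ (-a)) (ψ b) ≤ ψ c :=
        AC1' (-a) b c (neg_ne_zero.mpr ha0) hb0 hab (by rw [hc]; abel)
      rw [psneg a ha0] at h1'
      have hge : ψ a ≤ ψ c := by
        rw [min_eq_left h.le] at h1'; exact h1'
      have h2' : min (ψ b) (ψ (-c)) ≤ ψ a :=
        AC1' b (-c) a hb0 (neg_ne_zero.mpr hab) ha0 (by rw [hc]; abel)
      rw [psneg c hab] at h2'
      have hle : ψ c ≤ ψ a :=
        (min_le_iff.mp h2').resolve_left (not_le.mpr h)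
      exact le_antisymm hle hge
    have hd0 : (0 : Γ) < d := sub_pos.mpr h
    -- ψ a < ψ d
    have hdd : ψ a < ψ d := by
      by_contra hle
      push_neg at hle
      have h3 := AC3 d b hd0 hb0
      have : d + ψ d ≤ ψ b := by
        calc d + ψ d ≤ d + ψ a := add_le_add_right hle d
          _ = ψ b := by rw [hd]; abel
      exact absurd h3 (not_lt.mpr this)
    have hcd : c + d ≠ 0 := by
      intro h0
      have hdc : d = -c := eq_neg_of_add_eq_zero_right h0
      rw [hdc, psneg c hab, hca] at hdd
      exact lt_irrefl _ hdd
    have key : ψ (c + d) = ψ a := by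
      have h1 : min (ψ c) (ψ d) ≤ ψ (c + d) := AC1 c d hab (ne_of_gt hd0) hcd
      have hge : ψ a ≤ ψ (c + d) := by
        rw [min_eq_left (by rw [hca]; exact hdd.le)] at h1
        rw [← hca]; exact h1
      have h2 : min (ψ (c + d)) (ψ (-d)) ≤ ψ c :=
        AC1' (c + d) (-d) c hcd (neg_ne_zero.mpr (ne_of_gt hd0)) hab (by abel)
      rw [psneg d (ne_of_gt hd0)] at h2
      have hle : ψ (c + d) ≤ ψ a := by
        rw [hca] at h2
        exact (min_le_iff.mp h2).resolve_right (not_le.mpr hdd)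
      exact le_antisymm hle hge
    have hba : β - α = c + d := by
      rw [hc, hd, ← haeq, ← hbeq]; abel
    rw [hba, key]
  · intro α β hne
    obtain ⟨ha0, haeq⟩ := hint α
    constructor
    · intro hb
      have hab : α - β ≠ 0 := sub_ne_zero.mpr hne
      have heq : (α - β) + ψ (α - β) = α := by rw [← hb]; abel
      have h2 : α - β = int α := inj _ _ hab ha0 (by rw [heq, haeq])
      rw [hb, h2]
    · intro hb
      subst hb
      have e : α - ψ (int α) = int α := (eq_sub_of_add_eq haeq).symm
      rw [e]
  · intro α
    obtain ⟨ha0, haeq⟩ := hint α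
    obtain ⟨hg0, hgeq⟩ := hint (ψ (int α))
    set γ := int (ψ (int α)) with hγ
    rcases lt_trichotomy γ 0 with hneg | h0 | hpos
    · have : γ + ψ γ < ψ γ := by
        have := add_lt_add_right hneg (ψ γ)
        simpa using this
      rw [← hgeq]
      exact this
    · exact absurd h0 hg0
    · have h3 := AC3 γ (int α) hpos ha0
      rw [hgeq] at h3
      exact absurd h3 (lt_irrefl _)
end

section
/- Let (Γ, ψ) be an H-asymptotic couple with asymptotic integration and contraction map χ. Then: (1) for nonzero γ ∈ Γ, the archimedean class [χ(γ)] is strictly smaller than [γ]; (2) for α ≠ β in Γ, [χ(α) − χ(β)] < [α − β]; (3) if α < β in Γ then α − χ(α) < β − χ(β). -/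
/-- Let `(Γ, ψ)` be an H-asymptotic couple with asymptotic integration and
contraction map `χ` (`χ 0 = 0`, `χ γ = int (ψ γ)` for `γ ≠ 0`). Then:
(1) for nonzero `γ`, `[χ γ] < [γ]`, i.e. `n|χ γ| < |γ|` for all `n ≥ 1`;
(2) for `α ≠ β`, `[χ α − χ β] < [α − β]`;
(3) if `α < β` then `α − χ α < β − χ β`. -/
theorem stmt_8 {Γ : Type*} [AddCommGroup Γ] [LinearOrder Γ] [IsOrderedAddMonoid Γ] (ψ : Γ → Γ)
    (AC1 : ∀ α β : Γ, α ≠ 0 → β ≠ 0 → α + β ≠ 0 → min (ψ α) (ψ β) ≤ ψ (α + β))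
    (AC2 : ∀ (α : Γ) (k : ℤ), α ≠ 0 → k ≠ 0 → ψ (k • α) = ψ α)
    (AC3 : ∀ α β : Γ, 0 < α → β ≠ 0 → ψ β < α + ψ α)
    (HC : ∀ α β : Γ, 0 < α → α ≤ β → ψ β ≤ ψ α)
    (int : Γ → Γ)
    (hint : ∀ α : Γ, int α ≠ 0 ∧ int α + ψ (int α) = α)
    (χ : Γ → Γ) (hχ0 : χ 0 = 0) (hχ : ∀ γ : Γ, γ ≠ 0 → χ γ = int (ψ γ)) :
    (∀ γ : Γ, γ ≠ 0 → ∀ n : ℕ, 1 ≤ n → n • |χ γ| < |γ|) ∧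
    (∀ α β : Γ, α ≠ β → ∀ n : ℕ, 1 ≤ n → n • |χ α - χ β| < |α - β|) ∧
    (∀ α β : Γ, α < β → α - χ α < β - χ β) := by
  -- ψ is invariant under negation / absolute value / positive multiples
  have habs : ∀ x : Γ, x ≠ 0 → ψ |x| = ψ x := by
    intro x hx
    rcases abs_choice x with h | h
    · rw [h]
    · rw [h]
      have := AC2 x (-1) hx (by norm_num)
      simpa using this
  have hnsmul : ∀ (x : Γ) (n : ℕ), x ≠ 0 → 1 ≤ n → ψ (n • x) = ψ x := by
    intro x n hx hn
    have := AC2 x (n : ℤ) hx (by exact_mod_cast Nat.one_le_iff_ne_zero.mp hn)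
    simpa [natCast_zsmul] using this
  -- from ψ x < ψ y, the archimedean class of y is smaller than that of x
  have hclass : ∀ x y : Γ, x ≠ 0 → y ≠ 0 → ψ x < ψ y → ∀ n : ℕ, n • |y| < |x| := by
    intro x y hx hy hlt n
    by_contra h
    push_neg at h
    have hn : 1 ≤ n := by
      rcases Nat.eq_zero_or_pos n with h0 | h1
      · subst h0; simp at h
        exact absurd h hx
      · exact h1
    have h1 : ψ (n • |y|) ≤ ψ |x| := HC |x| (n • |y|) (abs_pos.mpr hx) h
    rw [hnsmul |y| n (abs_ne_zero.mpr hy) hn, habs y hy, habs x hx] at h1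
    exact absurd h1 (not_le.mpr hlt)
  -- Part (1)
  have part1 : ∀ γ : Γ, γ ≠ 0 → ∀ n : ℕ, 1 ≤ n → n • |χ γ| < |γ| := by
    intro γ hγ n hn
    by_contra hle
    push_neg at hle
    obtain ⟨hbne, hbeq⟩ := hint (ψ γ)
    rw [← hχ γ hγ] at hbne hbeq
    have h1 : ψ (n • |χ γ|) ≤ ψ |γ| := HC |γ| (n • |χ γ|) (abs_pos.mpr hγ) hle
    rw [hnsmul |χ γ| n (abs_ne_zero.mpr hbne) hn, habs (χ γ) hbne, habs γ hγ] at h1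
    -- ψ (χ γ) ≤ ψ γ = χ γ + ψ (χ γ), hence 0 ≤ χ γ, hence 0 < χ γ
    have hnonneg : 0 ≤ χ γ := by
      have := h1.trans (le_of_eq hbeq.symm)
      exact nonneg_of_neg_nonpos (by simpa using neg_nonpos_of_nonneg (sub_nonneg.mpr this)) |>.trans_eq rfl
    have hbpos : 0 < χ γ := lt_of_le_of_ne hnonneg (Ne.symm hbne)
    have := AC3 (χ γ) γ hbpos hγ
    rw [hbeq] at this
    exact lt_irrefl _ this
  -- key asymmetric case of part (2)
  have key : ∀ α β : Γ, α ≠ 0 → β ≠ 0 → ψ α < ψ β → ∀ n : ℕ, 1 ≤ n →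
      n • |χ α - χ β| < |α - β| := by
    intro α β hα hβ hlt n hn
    have hba := hclass α β hα hβ hlt
    have h1 := part1 α hα (2 * n) (by omega)
    have h2 := part1 β hβ (2 * n) (by omega)
    have h3 := hba 3
    rw [mul_smul, two_smul] at h1 h2
    have e3 : (3 : ℕ) • |β| = |β| + |β| + |β| := by
      rw [show (3 : ℕ) = 2 + 1 from rfl, add_nsmul, two_smul, one_nsmul]
    rw [e3] at h3
    set A := n • |χ α| with hA
    set B := n • |χ β| with hB
    -- A + B + |β| < |α|
    have h4 : A + B + |β| < |α| := by
      by_contra hc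
      push_neg at hc
      have : |α| + |α| ≤ (A + B + |β|) + (A + B + |β|) := add_le_add hc hc
      have h5 : (A + B + |β|) + (A + B + |β|) = (A + A) + (B + B) + (|β| + |β|) := by
        abel
      rw [h5] at this
      have h6 : (A + A) + (B + B) + (|β| + |β|) < |α| + |β| + (|β| + |β|) :=
        add_lt_add_of_lt_of_le (add_lt_add h1 h2) le_rfl
      have h7 : |α| + |β| + (|β| + |β|) = |α| + (|β| + |β| + |β|) := by abel
      have h8 : |α| + (|β| + |β| + |β|) < |α| + |α| := add_lt_add_right h3 _
      exact absurd ((this.trans_lt h6).trans_eq h7 |>.trans h8) (lt_irrefl _)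
    -- conclude
    have h9 : n • |χ α - χ β| ≤ A + B := by
      calc n • |χ α - χ β| ≤ n • (|χ α| + |χ β|) :=
            nsmul_le_nsmul_right (abs_sub _ _) n
        _ = A + B := by rw [smul_add]
    have h10 : A + B < |α| - |β| := lt_sub_iff_add_lt.mpr h4
    have h11 : |α| - |β| ≤ |α - β| := abs_sub_abs_le_abs_sub α β
    exact h9.trans_lt (h10.trans_le h11)
  -- Part (2)
  have part2 : ∀ α β : Γ, α ≠ β → ∀ n : ℕ, 1 ≤ n → n • |χ α - χ β| < |α - β| := by
    intro α β hne n hn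
    by_cases hα : α = 0
    · subst hα
      have hβ : β ≠ 0 := fun h => hne h.symm
      simpa [hχ0, abs_sub_comm] using part1 β hβ n hn
    by_cases hβ : β = 0
    · subst hβ
      simpa [hχ0] using part1 α hα n hn
    rcases lt_trichotomy (ψ α) (ψ β) with h | h | h
    · exact key α β hα hβ h n hn
    · have : χ α = χ β := by rw [hχ α hα, hχ β hβ, h]
      rw [this, sub_self, abs_zero, smul_zero]
      exact abs_pos.mpr (sub_ne_zero.mpr hne)
    · have := key β α hβ hα h n hn
      rwa [abs_sub_comm (χ β) (χ α), abs_sub_comm β α] at this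
  refine ⟨part1, part2, ?_⟩
  intro α β hlt
  have h := part2 α β (ne_of_lt hlt) 1 le_rfl
  rw [one_nsmul] at h
  have h1 : |α - β| = β - α := by
    rw [abs_sub_comm, abs_of_pos (sub_pos.mpr hlt)]
  rw [h1] at h
  have h2 : χ β - χ α ≤ |χ α - χ β| := by
    rw [abs_sub_comm]; exact le_abs_self _
  have h3 : χ β - χ α < β - α := h2.trans_lt h
  have h4 := sub_lt_sub_iff.mp h3
  rw [sub_lt_sub_iff, add_comm]
  exact h4
end

section
/- Let (Γ, ψ) be an H-asymptotic couple with asymptotic integration, with successor function s. If α ∈ (Γ^{<0})′ and n ≥ 1, then α + (n+1)(s(α) − α) ∈ (Γ^{>0})′. -/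
/-- Let `(Γ, ψ)` be an H-asymptotic couple with asymptotic integration and
successor function `s α = ψ (int α)`. If `α ∈ (Γ^{<0})'` and `n ≥ 1`, then
`α + (n+1)(s α − α) ∈ (Γ^{>0})'`. -/
theorem stmt_9 {Γ : Type*} [AddCommGroup Γ] [LinearOrder Γ] [IsOrderedAddMonoid Γ] (ψ : Γ → Γ)
    (AC1 : ∀ α β : Γ, α ≠ 0 → β ≠ 0 → α + β ≠ 0 → min (ψ α) (ψ β) ≤ ψ (α + β))
    (AC2 : ∀ (α : Γ) (k : ℤ), α ≠ 0 → k ≠ 0 → ψ (k • α) = ψ α)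
    (AC3 : ∀ α β : Γ, 0 < α → β ≠ 0 → ψ β < α + ψ α)
    (HC : ∀ α β : Γ, 0 < α → α ≤ β → ψ β ≤ ψ α)
    (int : Γ → Γ)
    (hint : ∀ α : Γ, int α ≠ 0 ∧ int α + ψ (int α) = α)
    (α : Γ) (hα : ∃ γ : Γ, γ < 0 ∧ γ + ψ γ = α) (n : ℕ) (hn : 1 ≤ n) :
    ∃ δ : Γ, 0 < δ ∧ δ + ψ δ = α + (n + 1) • (ψ (int α) - α) := by
  obtain ⟨γ, hγ0, hγα⟩ := hα
  have hsymm : ∀ a : Γ, a ≠ 0 → ψ (-a) = ψ a := by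
    intro a ha
    have h := AC2 a (-1) ha (by norm_num)
    simpa using h
  obtain ⟨hβ0, hβsum⟩ := hint α
  have hβγ : int α = γ := by
    by_contra hne
    have hsum : int α + ψ (int α) = γ + ψ γ := by rw [hβsum, hγα]
    rcases lt_trichotomy (int α) 0 with hb | hb | hb
    · rcases lt_trichotomy (int α) γ with h | h | h
      · -- int α < γ < 0 : ψ (int α) ≤ ψ γ
        have hψ : ψ (int α) ≤ ψ γ := by
          have := HC (-γ) (-(int α)) (neg_pos.mpr hγ0) (neg_le_neg h.le)
          rwa [hsymm _ hβ0, hsymm _ (ne_of_lt hγ0)] at this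
        exact absurd hsum (ne_of_lt (add_lt_add_of_lt_of_le h hψ))
      · exact hne h
      · -- γ < int α < 0 : ψ γ ≤ ψ (int α)
        have hψ : ψ γ ≤ ψ (int α) := by
          have := HC (-(int α)) (-γ) (neg_pos.mpr hb) (neg_le_neg h.le)
          rwa [hsymm _ (ne_of_lt hγ0), hsymm _ hβ0] at this
        exact absurd hsum (ne_of_gt (add_lt_add_of_lt_of_le h hψ))
    · exact hβ0 hb
    · -- int α > 0, γ < 0 : γ + ψ γ < ψ γ < int α + ψ (int α)
      have h1 := AC3 (int α) γ hb (ne_of_lt hγ0)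
      rw [hsum] at h1
      exact absurd ((lt_add_iff_pos_left _).mp h1) (not_lt.mpr hγ0.le)
  have hψδ : ψ (n • (-γ)) = ψ γ := by
    have h := AC2 γ (-(n : ℤ)) (ne_of_lt hγ0) (by exact_mod_cast by omega)
    rw [show (-(n : ℤ)) • γ = n • (-γ) by
      rw [neg_zsmul, natCast_zsmul, smul_neg]] at h
    exact h
  refine ⟨n • (-γ), nsmul_pos (neg_pos.mpr hγ0) (by omega), ?_⟩
  rw [hψδ, hβγ, ← hγα]
  have h1 : ψ γ - (γ + ψ γ) = -γ := by abel
  rw [h1, succ_nsmul]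
  abel
end

section
/- Let (Γ, ψ) be an H-asymptotic couple with asymptotic integration. Then the set Ψ = ψ(Γ∖{0}) and its downward closure Ψ↓ = (Γ^{<0})′ are jammed subsets of Γ. -/
/-- Let `(Γ, ψ)` be an H-asymptotic couple with asymptotic integration.
Then `Ψ = ψ(Γ∖{0})` and its downward closure `Ψ↓ = (Γ^{<0})'` are jammed subsets of Γ. -/
theorem stmt_10 {Γ : Type*} [AddCommGroup Γ] [LinearOrder Γ] [IsOrderedAddMonoid Γ] (ψ : Γ → Γ)
    (AC1 : ∀ α β : Γ, α ≠ 0 → β ≠ 0 → α + β ≠ 0 → min (ψ α) (ψ β) ≤ ψ (α + β))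
    (AC2 : ∀ (α : Γ) (k : ℤ), α ≠ 0 → k ≠ 0 → ψ (k • α) = ψ α)
    (AC3 : ∀ α β : Γ, 0 < α → β ≠ 0 → ψ β < α + ψ α)
    (HC : ∀ α β : Γ, 0 < α → α ≤ β → ψ β ≤ ψ α)
    (hai : ∀ β : Γ, ∃ γ : Γ, γ ≠ 0 ∧ γ + ψ γ = β) :
    IsJammed {β : Γ | ∃ γ : Γ, γ ≠ 0 ∧ ψ γ = β} ∧
    IsJammed {β : Γ | ∃ γ : Γ, γ < 0 ∧ γ + ψ γ = β} := by
  -- ψ is even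
  have hψneg : ∀ γ : Γ, γ ≠ 0 → ψ (-γ) = ψ γ := by
    intro γ hγ
    have h := AC2 γ (-1) hγ (by norm_num)
    simpa using h
  -- a nontrivial convex subgroup contains a positive element
  have hpos : ∀ Δ : AddSubgroup Γ, Δ ≠ ⊥ → ∃ δ : Γ, 0 < δ ∧ δ ∈ Δ := by
    intro Δ hΔ
    obtain ⟨a, haΔ, ha⟩ : ∃ a ∈ Δ, a ≠ 0 := by
      by_contra h
      push_neg at h
      exact hΔ ((AddSubgroup.eq_bot_iff_forall Δ).2 h)
    rcases lt_or_gt_of_ne ha with h | h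
    · exact ⟨-a, neg_pos.2 h, neg_mem haΔ⟩
    · exact ⟨a, h, haΔ⟩
  constructor
  · refine ⟨?_, ?_, ?_⟩
    · obtain ⟨γ, hγ, _⟩ := hai 0
      exact ⟨ψ γ, γ, hγ, rfl⟩
    · rintro ⟨m, ⟨γ, hγ, rfl⟩, hmax⟩
      obtain ⟨γ₁, hγ₁, hsum⟩ := hai (ψ γ)
      have h1 : ψ γ₁ ≤ ψ γ := hmax _ ⟨γ₁, hγ₁, rfl⟩
      have hp : 0 < γ₁ := by
        rcases lt_or_gt_of_ne hγ₁ with h | h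
        · exfalso
          have h2 : ψ γ < ψ γ₁ := by
            rw [← hsum]
            simpa using add_lt_add_right h (ψ γ₁)
          exact absurd h1 h2.not_ge
        · exact h
      have h3 := AC3 γ₁ γ hp hγ
      rw [hsum] at h3
      exact lt_irrefl _ h3
    · intro Δ hconv hΔ
      obtain ⟨δ, hδ, hδΔ⟩ := hpos Δ hΔ
      refine ⟨ψ δ, ⟨δ, ne_of_gt hδ, rfl⟩, ?_⟩
      rintro γ₁ ⟨ε, hε, rfl⟩ hlt
      have h3 := AC3 δ ε hδ hε
      exact hconv 0 (zero_mem Δ) δ hδΔ (ψ ε - ψ δ) (sub_nonneg.2 hlt.le)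
        (sub_le_iff_le_add.2 h3.le)
  · -- Ψ ⊆ Ψ↓
    have hsub : ∀ γ : Γ, γ ≠ 0 → ∃ δ : Γ, δ < 0 ∧ δ + ψ δ = ψ γ := by
      intro γ hγ
      obtain ⟨δ, hδ, hsum⟩ := hai (ψ γ)
      refine ⟨δ, ?_, hsum⟩
      rcases lt_or_gt_of_ne hδ with h | h
      · exact h
      · exfalso
        have h3 := AC3 δ γ h hγ
        rw [hsum] at h3
        exact lt_irrefl _ h3
    refine ⟨?_, ?_, ?_⟩
    · obtain ⟨γ, hγ, _⟩ := hai 0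
      obtain ⟨δ, hδ, hsum⟩ := hsub γ hγ
      exact ⟨ψ γ, δ, hδ, hsum⟩
    · rintro ⟨m, ⟨γ, hγ, rfl⟩, hmax⟩
      obtain ⟨δ, hδ, hsum⟩ := hsub γ (ne_of_lt hγ)
      have h2 := hmax (ψ γ) ⟨δ, hδ, hsum⟩
      exact absurd ((le_add_iff_nonneg_left _).1 h2) (not_le.2 hγ)
    · intro Δ hconv hΔ
      obtain ⟨δ, hδ, hδΔ⟩ := hpos Δ hΔ
      refine ⟨-δ + ψ δ, ⟨-δ, neg_lt_zero.2 hδ, by rw [hψneg δ (ne_of_gt hδ)]⟩, ?_⟩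
      rintro γ₁ ⟨ε, hε, rfl⟩ hlt
      have h3 := AC3 δ ε hδ (ne_of_lt hε)
      have key : ε + ψ ε ≤ δ + ψ δ := by
        calc ε + ψ ε ≤ 0 + (δ + ψ δ) := add_le_add hε.le h3.le
        _ = δ + ψ δ := zero_add _
      have hub : ε + ψ ε - (-δ + ψ δ) ≤ δ + δ := by
        calc ε + ψ ε - (-δ + ψ δ) ≤ (δ + ψ δ) - (-δ + ψ δ) := sub_le_sub_right key _
        _ = δ + δ := by abel
      exact hconv 0 (zero_mem Δ) (δ + δ) (add_mem hδΔ hδΔ)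
        (ε + ψ ε - (-δ + ψ δ)) (sub_nonneg.2 hlt.le) hub
end

section
/- Let (Γ, ψ) be an H-asymptotic couple with asymptotic integration, and γ ∈ Γ nonzero. Then ∫(γ′ − ∫s(γ′)) = γ + (s(γ†) − γ†) = γ − χ(γ), where γ† := ψ(γ) and γ′ := γ + ψ(γ). -/
/-- Let `(Γ, ψ)` be an H-asymptotic couple with asymptotic integration and
`γ ≠ 0`. Then `∫(γ' − ∫ s(γ')) = γ + (s(γ†) − γ†) = γ − χ(γ)`, where `γ† = ψ γ`,
`γ' = γ + ψ γ`, `s α = ψ (int α)` and `χ γ = int (ψ γ)`. -/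
theorem stmt_11 {Γ : Type*} [AddCommGroup Γ] [LinearOrder Γ] [IsOrderedAddMonoid Γ] (ψ : Γ → Γ)
    (AC1 : ∀ α β : Γ, α ≠ 0 → β ≠ 0 → α + β ≠ 0 → min (ψ α) (ψ β) ≤ ψ (α + β))
    (AC2 : ∀ (α : Γ) (k : ℤ), α ≠ 0 → k ≠ 0 → ψ (k • α) = ψ α)
    (AC3 : ∀ α β : Γ, 0 < α → β ≠ 0 → ψ β < α + ψ α)
    (HC : ∀ α β : Γ, 0 < α → α ≤ β → ψ β ≤ ψ α)
    (int : Γ → Γ)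
    (hint : ∀ α : Γ, int α ≠ 0 ∧ int α + ψ (int α) = α)
    (γ : Γ) (hγ : γ ≠ 0) :
    int ((γ + ψ γ) - int (ψ (int (γ + ψ γ)))) = γ + (ψ (int (ψ γ)) - ψ γ) ∧
    γ + (ψ (int (ψ γ)) - ψ γ) = γ - int (ψ γ) := by
  -- strict monotonicity of a ↦ a + ψ a on nonzero elements
  have mono : ∀ a b : Γ, a ≠ 0 → b ≠ 0 → a < b → a + ψ a < b + ψ b := by
    intro a b ha hb hab
    have hd : b - a ≠ 0 := sub_ne_zero.mpr (ne_of_gt hab)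
    have h3 := AC3 (b - a) a (sub_pos.mpr hab) ha
    by_cases h : ψ (b - a) ≤ ψ b
    · calc a + ψ a < a + ((b - a) + ψ (b - a)) := add_lt_add_right h3 a
        _ ≤ a + ((b - a) + ψ b) := add_le_add_right (add_le_add_right h _) a
        _ = b + ψ b := by abel
    · have h1 := AC1 (b - a) a hd ha (by simpa using hb)
      have hba : (b - a) + a = b := by abel
      rw [hba] at h1
      have hψab : ψ a ≤ ψ b := (min_le_iff.mp h1).resolve_left h
      exact add_lt_add_of_lt_of_le hab hψab
  have inj : ∀ a b : Γ, a ≠ 0 → b ≠ 0 → a + ψ a = b + ψ b → a = b := by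
    intro a b ha hb hab
    rcases lt_trichotomy a b with h | h | h
    · exact absurd hab (ne_of_lt (mono a b ha hb h))
    · exact h
    · exact absurd hab.symm (ne_of_lt (mono b a hb ha h))
  -- int (γ + ψ γ) = γ
  obtain ⟨hg1, hg2⟩ := hint (γ + ψ γ)
  have hγ' : int (γ + ψ γ) = γ := inj _ _ hg1 hγ hg2
  -- properties of c := int (ψ γ)
  obtain ⟨hc0, hc2⟩ := hint (ψ γ)
  set c := int (ψ γ) with hc
  have hcneg : c < 0 := by
    rcases lt_trichotomy c 0 with h | h | h
    · exact h
    · exact absurd h hc0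
    · exact absurd hc2 (ne_of_gt (AC3 c γ h hγ))
  have hψc : ψ c = ψ γ - c := eq_sub_of_add_eq' hc2
  have hne : γ - c ≠ 0 := by
    intro h
    have hgc : γ = c := sub_eq_zero.mp h
    rw [hgc] at hψc
    exact hc0 (sub_eq_self.mp hψc.symm)
  have hψnegc : ψ (-c) = ψ c := by
    have := AC2 c (-1) hc0 (by norm_num)
    simpa using this
  have hcgt : ψ γ < ψ c := by
    rw [hψc]
    simpa using sub_lt_sub_left hcneg (ψ γ)
  -- ψ (γ - c) = ψ γ
  have hψgc : ψ (γ - c) = ψ γ := by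
    have h1 := AC1 γ (-c) hγ (neg_ne_zero.mpr hc0) (by simpa [sub_eq_add_neg] using hne)
    rw [hψnegc, min_eq_left hcgt.le] at h1
    have h1' : ψ γ ≤ ψ (γ - c) := by simpa [sub_eq_add_neg] using h1
    have h2 := AC1 (γ - c) c hne hc0 (by simpa using hγ)
    have hgcc : (γ - c) + c = γ := by abel
    rw [hgcc] at h2
    have h2' : ψ (γ - c) ≤ ψ γ := (min_le_iff.mp h2).resolve_right (not_le.mpr hcgt)
    exact le_antisymm h2' h1'
  -- int (γ + ψ γ - c) = γ - c
  obtain ⟨hd1, hd2⟩ := hint ((γ + ψ γ) - c)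
  have key : int ((γ + ψ γ) - c) = γ - c := by
    apply inj _ _ hd1 hne
    rw [hd2, hψgc]
    abel
  constructor
  · rw [hγ', key, hψc]; abel
  · rw [hψc]; abel
end

section
/- Let (Γ, ψ) be an H-asymptotic couple with asymptotic integration. For γ ∈ (Γ^{>0})′ we have ∫γ > −∫s(γ) = −χ(∫γ) > 0. Furthermore, if γ₀, γ₁ ∈ (Γ^{>0})′ and γ₀ ≤ γ₁, then −∫s(γ₀) ≤ −∫s(γ₁). -/
/-- Let `(Γ, ψ)` be an H-asymptotic couple with asymptotic integration.
For `α ∈ (Γ^{>0})'` we have `∫α > −∫s(α) = −χ(∫α) > 0`; moreover if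
`α₀, α₁ ∈ (Γ^{>0})'` and `α₀ ≤ α₁` then `−∫s(α₀) ≤ −∫s(α₁)`. Here `int α` is the unique
nonzero `β` with `β + ψ β = α`, `s α = ψ (int α)`, `χ γ = int (ψ γ)` for `γ ≠ 0`. -/
theorem stmt_12 {Γ : Type*} [AddCommGroup Γ] [LinearOrder Γ] [IsOrderedAddMonoid Γ] (ψ : Γ → Γ)
    (AC1 : ∀ α β : Γ, α ≠ 0 → β ≠ 0 → α + β ≠ 0 → min (ψ α) (ψ β) ≤ ψ (α + β))
    (AC2 : ∀ (α : Γ) (k : ℤ), α ≠ 0 → k ≠ 0 → ψ (k • α) = ψ α)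
    (AC3 : ∀ α β : Γ, 0 < α → β ≠ 0 → ψ β < α + ψ α)
    (HC : ∀ α β : Γ, 0 < α → α ≤ β → ψ β ≤ ψ α)
    (int : Γ → Γ)
    (hint : ∀ α : Γ, int α ≠ 0 ∧ int α + ψ (int α) = α)
    (χ : Γ → Γ) (hχ0 : χ 0 = 0) (hχ : ∀ γ : Γ, γ ≠ 0 → χ γ = int (ψ γ)) :
    (∀ α : Γ, (∃ γ : Γ, 0 < γ ∧ γ + ψ γ = α) →
      -(int (ψ (int α))) < int α ∧ -(int (ψ (int α))) = -(χ (int α)) ∧ 0 < -(χ (int α))) ∧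
    (∀ α₀ α₁ : Γ, (∃ γ : Γ, 0 < γ ∧ γ + ψ γ = α₀) → (∃ γ : Γ, 0 < γ ∧ γ + ψ γ = α₁) →
      α₀ ≤ α₁ → -(int (ψ (int α₀))) ≤ -(int (ψ (int α₁)))) := by
  -- the map a ↦ a + ψ a is strictly increasing on nonzero elements
  have mono : ∀ a b : Γ, a ≠ 0 → b ≠ 0 → a < b → a + ψ a < b + ψ b := by
    intro a b ha hb hab
    have hd : b - a ≠ 0 := sub_ne_zero.mpr (ne_of_gt hab)
    have he : a + (b - a) = b := by abel
    have h1 : min (ψ a) (ψ (b - a)) ≤ ψ b := by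
      have := AC1 a (b - a) ha hd (by rw [he]; exact hb)
      rwa [he] at this
    rcases le_total (ψ a) (ψ (b - a)) with h|h
    · have hab2 : ψ a ≤ ψ b := le_trans (le_min le_rfl h) h1
      exact add_lt_add_of_lt_of_le hab hab2
    · have hab2 : ψ (b - a) ≤ ψ b := le_trans (le_min h le_rfl) h1
      have h3 : ψ a < (b - a) + ψ (b - a) := AC3 (b - a) a (sub_pos.mpr hab) ha
      have h4 : ψ a < (b - a) + ψ b := lt_of_lt_of_le h3 (add_le_add_right hab2 _)
      calc a + ψ a < a + ((b - a) + ψ b) := add_lt_add_right h4 a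
        _ = b + ψ b := by abel
  have inj : ∀ a b : Γ, a ≠ 0 → b ≠ 0 → a + ψ a = b + ψ b → a = b := by
    intro a b ha hb h
    rcases lt_trichotomy a b with h1|h1|h1
    · exact absurd h (ne_of_lt (mono a b ha hb h1))
    · exact h1
    · exact absurd h.symm (ne_of_lt (mono b a hb ha h1))
  -- key: for γ > 0, β := int (ψ γ) satisfies β < 0 and -β < γ
  have key : ∀ γ : Γ, 0 < γ → int (ψ γ) < 0 ∧ -(int (ψ γ)) < γ := by
    intro γ hγ
    obtain ⟨hβ0, hβ⟩ := hint (ψ γ)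
    have hneg : int (ψ γ) < 0 := by
      rcases hβ0.lt_or_gt with h|h
      · exact h
      · exfalso
        have := AC3 (int (ψ γ)) γ h (ne_of_gt hγ)
        rw [hβ] at this
        exact lt_irrefl _ this
    refine ⟨hneg, ?_⟩
    by_contra hle
    push_neg at hle
    have hψ : ψ (-(int (ψ γ))) ≤ ψ γ := HC γ (-(int (ψ γ))) hγ hle
    have hψβ : ψ (-(int (ψ γ))) = ψ (int (ψ γ)) := by
      have := AC2 (int (ψ γ)) (-1) hβ0 (by norm_num)
      simpa using this
    rw [hψβ] at hψ
    have h0 : (0:Γ) ≤ int (ψ γ) := (le_add_iff_nonneg_left _).mp (hψ.trans hβ.ge)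
    exact absurd h0 (not_le.mpr hneg)
  constructor
  · rintro α ⟨γ, hγ, hγα⟩
    have hiα : int α = γ :=
      inj _ _ (hint α).1 (ne_of_gt hγ) (by rw [(hint α).2, hγα])
    obtain ⟨hneg, hlt⟩ := key γ hγ
    rw [hiα, hχ γ (ne_of_gt hγ)]
    exact ⟨hlt, rfl, neg_pos.mpr hneg⟩
  · rintro α₀ α₁ ⟨γ₀, hγ₀, hγα₀⟩ ⟨γ₁, hγ₁, hγα₁⟩ hle
    have hi₀ : int α₀ = γ₀ :=
      inj _ _ (hint α₀).1 (ne_of_gt hγ₀) (by rw [(hint α₀).2, hγα₀])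
    have hi₁ : int α₁ = γ₁ :=
      inj _ _ (hint α₁).1 (ne_of_gt hγ₁) (by rw [(hint α₁).2, hγα₁])
    have hγle : γ₀ ≤ γ₁ := by
      by_contra hgt
      push_neg at hgt
      have := mono γ₁ γ₀ (ne_of_gt hγ₁) (ne_of_gt hγ₀) hgt
      rw [hγα₀, hγα₁] at this
      exact absurd hle (not_le.mpr this)
    have hψle : ψ γ₁ ≤ ψ γ₀ := HC γ₀ γ₁ hγ₀ hγle
    have hβle : int (ψ γ₁) ≤ int (ψ γ₀) := by
      by_contra hgt
      push_neg at hgt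
      have := mono _ _ (hint (ψ γ₀)).1 (hint (ψ γ₁)).1 hgt
      rw [(hint (ψ γ₀)).2, (hint (ψ γ₁)).2] at this
      exact absurd hψle (not_le.mpr this)
    rw [hi₀, hi₁]
    exact neg_le_neg hβle
end

section
/- Let (Γ, ψ) be an H-asymptotic couple with asymptotic integration, and let S ⊆ Γ be a nonempty convex subset without a greatest element having the yardstick property. Then for every γ ∈ S, γ − χ(γ) ∈ S. -/
/-- Let `(Γ, ψ)` be an H-asymptotic couple with asymptotic integration and
contraction map `χ`, and let `S ⊆ Γ` be nonempty, convex, without a greatest element,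
having the yardstick property. Then for every `γ ∈ S`, `γ − χ γ ∈ S`. -/
theorem stmt_13 {Γ : Type*} [AddCommGroup Γ] [LinearOrder Γ] [IsOrderedAddMonoid Γ] (ψ : Γ → Γ)
    (AC1 : ∀ α β : Γ, α ≠ 0 → β ≠ 0 → α + β ≠ 0 → min (ψ α) (ψ β) ≤ ψ (α + β))
    (AC2 : ∀ (α : Γ) (k : ℤ), α ≠ 0 → k ≠ 0 → ψ (k • α) = ψ α)
    (AC3 : ∀ α β : Γ, 0 < α → β ≠ 0 → ψ β < α + ψ α)
    (HC : ∀ α β : Γ, 0 < α → α ≤ β → ψ β ≤ ψ α)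
    (int : Γ → Γ)
    (hint : ∀ α : Γ, int α ≠ 0 ∧ int α + ψ (int α) = α)
    (χ : Γ → Γ) (hχ0 : χ 0 = 0) (hχ : ∀ γ : Γ, γ ≠ 0 → χ γ = int (ψ γ))
    (S : Set Γ) (hS : S.Nonempty)
    (hconv : ∀ a ∈ S, ∀ b ∈ S, ∀ c : Γ, a ≤ c → c ≤ b → c ∈ S)
    (hnomax : ¬ ∃ m ∈ S, ∀ x ∈ S, x ≤ m)
    (hyard : ∃ β ∈ S, ∀ γ ∈ S, β < γ → γ - χ γ ∈ S) :
    ∀ γ ∈ S, γ - χ γ ∈ S := by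
  -- strict monotonicity of x ↦ x + ψ x on nonzero elements
  have hmono : ∀ x y : Γ, x ≠ 0 → y ≠ 0 → x < y → x + ψ x < y + ψ y := by
    intro x y hx hy hxy
    have hd : (0:Γ) < y - x := sub_pos.mpr hxy
    have hd0 : y - x ≠ 0 := ne_of_gt hd
    have h1 : min (ψ x) (ψ (y - x)) ≤ ψ (x + (y - x)) := by
      apply AC1 x (y - x) hx hd0
      simpa using hy
    rw [add_sub_cancel] at h1
    rcases le_total (ψ x) (ψ (y - x)) with hc | hc
    · have h2 : ψ x ≤ ψ y := by simpa [min_eq_left hc] using h1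
      exact add_lt_add_of_lt_of_le hxy h2
    · have h2 : ψ (y - x) ≤ ψ y := by simpa [min_eq_right hc] using h1
      have h3 : ψ x < (y - x) + ψ (y - x) := AC3 (y - x) x hd hx
      calc x + ψ x < x + ((y - x) + ψ (y - x)) := add_lt_add_right h3 x
        _ = y + ψ (y - x) := by abel
        _ ≤ y + ψ y := add_le_add_right h2 y
  have hmono' : ∀ x y : Γ, x ≠ 0 → y ≠ 0 → x ≤ y → x + ψ x ≤ y + ψ y := by
    intro x y hx hy hxy
    rcases eq_or_lt_of_le hxy with rfl | h
    · exact le_rfl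
    · exact le_of_lt (hmono x y hx hy h)
  -- int is monotone
  have hintmono : ∀ a b : Γ, a ≤ b → int a ≤ int b := by
    intro a b hab
    by_contra h
    push_neg at h
    have h2 := hmono (int b) (int a) (hint b).1 (hint a).1 h
    rw [(hint a).2, (hint b).2] at h2
    exact absurd hab (not_le.mpr h2)
  -- χ is negative on nonzero elements
  have hneg : ∀ γ : Γ, γ ≠ 0 → χ γ < 0 := by
    intro γ hγ
    rw [hχ γ hγ]
    obtain ⟨hu0, hue⟩ := hint (ψ γ)
    rcases lt_trichotomy (int (ψ γ)) 0 with h | h | h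
    · exact h
    · exact absurd h hu0
    · have := AC3 (int (ψ γ)) γ h hγ
      rw [hue] at this
      exact absurd this (lt_irrefl _)
  have hneg' : ∀ γ : Γ, χ γ ≤ 0 := by
    intro γ
    rcases eq_or_ne γ 0 with rfl | h
    · exact le_of_eq hχ0
    · exact le_of_lt (hneg γ h)
  -- key lemma: a < b → a - χ a < b - χ b
  have hkey : ∀ a b : Γ, a < b → a - χ a < b - χ b := by
    intro a b hab
    rcases eq_or_ne a 0 with rfl | ha
    · have hb : b ≠ 0 := ne_of_gt hab
      have h5 : χ b < 0 := hneg b hb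
      rw [hχ0, sub_zero]
      exact sub_pos.mpr (h5.trans hab)
    rcases eq_or_ne b 0 with rfl | hb
    · -- show a - χ a < 0, i.e. a < χ a
      rw [hχ0, sub_zero, sub_neg]
      by_contra h
      push_neg at h
      have ha0 : a < 0 := hab
      have hu0 : χ a ≠ 0 := ne_of_lt (hneg a ha)
      have hm := hmono' (χ a) a hu0 ha h
      rw [hχ a ha, (hint (ψ a)).2] at hm
      exact absurd ((le_add_iff_nonneg_left _).mp hm) (not_le.mpr ha0)
    · -- both nonzero
      have hd : (0:Γ) < b - a := sub_pos.mpr hab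
      rcases le_or_gt (ψ b) (ψ a) with hc | hc
      · -- χ b ≤ χ a
        have hv : χ b ≤ χ a := by
          rw [hχ a ha, hχ b hb]
          exact hintmono _ _ hc
        exact lt_of_lt_of_le (sub_lt_sub_right hab _) (sub_le_sub_left hv b)
      · -- ψ a < ψ b; first ψ (b - a) ≤ ψ a
        have hd0 : b - a ≠ 0 := ne_of_gt hd
        have hnd0 : -(b - a) ≠ 0 := neg_ne_zero.mpr hd0
        have hpsineg : ψ (-(b - a)) = ψ (b - a) := by
          have := AC2 (b - a) (-1) hd0 (by norm_num)
          simpa using this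
        have hba : b + -(b - a) = a := by abel
        have h1 : min (ψ b) (ψ (-(b - a))) ≤ ψ (b + -(b - a)) := by
          apply AC1 b (-(b - a)) hb hnd0
          rw [hba]; exact ha
        rw [hba, hpsineg] at h1
        have hda : ψ (b - a) ≤ ψ a := by
          rcases le_total (ψ b) (ψ (b - a)) with h' | h'
          · have : ψ b ≤ ψ a := by simpa [min_eq_left h'] using h1
            exact absurd this (not_le.mpr hc)
          · simpa [min_eq_right h'] using h1
        -- -χ a < b - a
        have hu0 : χ a ≠ 0 := ne_of_lt (hneg a ha)
        have h2 : ψ (χ a) < (b - a) + ψ (b - a) := AC3 (b - a) (χ a) hd hu0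
        have h3 : χ a + ψ (χ a) = ψ a := by
          rw [hχ a ha]; exact (hint (ψ a)).2
        have e1 : ψ (χ a) < (b - a) + ψ a := lt_of_lt_of_le h2 (add_le_add_right hda _)
        have e2 : χ a + ψ (χ a) < χ a + ((b - a) + ψ a) := add_lt_add_right e1 _
        rw [h3, ← add_assoc] at e2
        have e3 : (0:Γ) < χ a + (b - a) := (lt_add_iff_pos_left _).mp e2
        have h4 : -(χ a) < b - a := neg_lt_iff_pos_add.mpr (by rw [add_comm] at e3; exact e3)
        have h5 : χ b < 0 := hneg b hb
        calc a - χ a = a + -(χ a) := sub_eq_add_neg a (χ a)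
          _ < a + (b - a) := add_lt_add_right h4 a
          _ = b := by abel
          _ ≤ b - χ b := by simpa using sub_le_sub_left (le_of_lt h5) b
  -- main argument
  intro γ hγ
  obtain ⟨β, hβS, hβ⟩ := hyard
  have hmS : max β γ ∈ S := by
    rcases max_cases β γ with ⟨h, _⟩ | ⟨h, _⟩ <;> rw [h] <;> assumption
  push_neg at hnomax
  obtain ⟨γ', hγ'S, hγ'gt⟩ := hnomax (max β γ) hmS
  have hβγ' : β < γ' := lt_of_le_of_lt (le_max_left _ _) hγ'gt
  have hγγ' : γ < γ' := lt_of_le_of_lt (le_max_right _ _) hγ'gt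
  have hδ : γ' - χ γ' ∈ S := hβ γ' hγ'S hβγ'
  have h1 : γ - χ γ < γ' - χ γ' := hkey γ γ' hγγ'
  have h2 : γ ≤ γ - χ γ := by simpa using sub_le_sub_left (hneg' γ) γ
  exact hconv γ hγ (γ' - χ γ') hδ (γ - χ γ) h2 (le_of_lt h1)
end

section
/- Let (Γ, ψ) be an H-asymptotic couple with asymptotic integration, and let S ⊆ Γ be a nonempty convex subset without a greatest element having the yardstick property. Then S is jammed if and only if the downward closure S↓ equals Γ^{<0}. -/
section Aux
variable {Γ : Type*} [AddCommGroup Γ] [LinearOrder Γ] [IsOrderedAddMonoid Γ]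

/-- `id + ψ` is strictly increasing on nonzero elements. -/
lemma aux_psi_mono (ψ : Γ → Γ)
    (AC1 : ∀ α β : Γ, α ≠ 0 → β ≠ 0 → α + β ≠ 0 → min (ψ α) (ψ β) ≤ ψ (α + β))
    (AC3 : ∀ α β : Γ, 0 < α → β ≠ 0 → ψ β < α + ψ α)
    {a b : Γ} (ha : a ≠ 0) (hb : b ≠ 0) (hab : a < b) :
    a + ψ a < b + ψ b := by
  have hba : b - a ≠ 0 := sub_ne_zero.mpr (ne_of_gt hab)
  rcases le_or_gt (ψ (b - a)) (ψ b) with h | h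
  · have h3 := AC3 (b - a) a (sub_pos.mpr hab) ha
    calc a + ψ a < a + ((b - a) + ψ (b - a)) := add_lt_add_right h3 a
      _ ≤ a + ((b - a) + ψ b) := add_le_add_right (add_le_add_right h _) a
      _ = b + ψ b := by abel
  · have h1 := AC1 a (b - a) ha hba (by simpa using hb)
    have heq : a + (b - a) = b := by abel
    rw [heq] at h1
    have hpa : ψ a ≤ ψ b := by
      rcases min_cases (ψ a) (ψ (b - a)) with ⟨he, _⟩ | ⟨he, hle⟩
      · rwa [he] at h1
      · rw [he] at h1; exact absurd h1 (not_le.mpr h)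
    exact add_lt_add_of_lt_of_le hab hpa

lemma aux_int_mono (ψ int : Γ → Γ)
    (AC1 : ∀ α β : Γ, α ≠ 0 → β ≠ 0 → α + β ≠ 0 → min (ψ α) (ψ β) ≤ ψ (α + β))
    (AC3 : ∀ α β : Γ, 0 < α → β ≠ 0 → ψ β < α + ψ α)
    (hint : ∀ α : Γ, int α ≠ 0 ∧ int α + ψ (int α) = α)
    {α α' : Γ} (h : α ≤ α') : int α ≤ int α' := by
  by_contra hc
  push_neg at hc
  have h2 := aux_psi_mono ψ AC1 AC3 (hint α').1 (hint α).1 hc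
  rw [(hint α').2, (hint α).2] at h2
  exact absurd h (not_le.mpr h2)

lemma aux_int_psi_neg (ψ int : Γ → Γ)
    (AC3 : ∀ α β : Γ, 0 < α → β ≠ 0 → ψ β < α + ψ α)
    (hint : ∀ α : Γ, int α ≠ 0 ∧ int α + ψ (int α) = α)
    {γ : Γ} (hγ : γ ≠ 0) : int (ψ γ) < 0 := by
  rcases (hint (ψ γ)) with ⟨hne, heq⟩
  rcases hne.lt_or_gt with h | h
  · exact h
  · have h3 := AC3 (int (ψ γ)) γ h hγ
    rw [heq] at h3
    exact absurd h3 (lt_irrefl _)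

lemma aux_psi_abs (ψ : Γ → Γ)
    (AC2 : ∀ (α : Γ) (k : ℤ), α ≠ 0 → k ≠ 0 → ψ (k • α) = ψ α)
    {γ : Γ} (h : γ ≠ 0) : ψ |γ| = ψ γ := by
  rcases abs_cases γ with ⟨he, _⟩ | ⟨he, _⟩
  · rw [he]
  · rw [he]
    have := AC2 γ (-1) h (by norm_num)
    simpa using this

lemma aux_psi_anti (ψ : Γ → Γ)
    (AC2 : ∀ (α : Γ) (k : ℤ), α ≠ 0 → k ≠ 0 → ψ (k • α) = ψ α)
    (HC : ∀ α β : Γ, 0 < α → α ≤ β → ψ β ≤ ψ α)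
    {u v : Γ} (hu : u ≠ 0) (hv : v ≠ 0) (h : |u| ≤ |v|) : ψ v ≤ ψ u := by
  rw [← aux_psi_abs ψ AC2 hu, ← aux_psi_abs ψ AC2 hv]
  exact HC |u| |v| (abs_pos.mpr hu) h

/-- `[χ w] < [w]` : every integer multiple of `χ w` is smaller than `|w|`. -/
lemma aux_small (ψ int : Γ → Γ)
    (AC2 : ∀ (α : Γ) (k : ℤ), α ≠ 0 → k ≠ 0 → ψ (k • α) = ψ α)
    (AC3 : ∀ α β : Γ, 0 < α → β ≠ 0 → ψ β < α + ψ α)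
    (HC : ∀ α β : Γ, 0 < α → α ≤ β → ψ β ≤ ψ α)
    (hint : ∀ α : Γ, int α ≠ 0 ∧ int α + ψ (int α) = α)
    {w : Γ} (hw : w ≠ 0) {n : ℤ} (hn : n ≠ 0) :
    |n • int (ψ w)| < |w| := by
  set c := int (ψ w) with hc
  have hc0 : c < 0 := aux_int_psi_neg ψ int AC3 hint hw
  have hcne : c ≠ 0 := ne_of_lt hc0
  have hnc : n • c ≠ 0 := by
    intro h
    exact hcne (zsmul_right_injective hn (by simpa using h))
  by_contra hle
  push_neg at hle
  have h1 : ψ (n • c) ≤ ψ w := aux_psi_anti ψ AC2 HC hw hnc hle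
  rw [AC2 c n hcne hn] at h1
  have h2 : c + ψ c = ψ w := (hint (ψ w)).2
  have h3 : ψ w < ψ c := by
    rw [← h2]
    simpa using add_lt_add_right hc0 (ψ c)
  exact absurd h1 (not_le.mpr h3)

/-- The convex subgroup of elements all of whose integer multiples are `< e`. -/
def mkDelta (e : Γ) (he : 0 < e) : AddSubgroup Γ where
  carrier := {δ | ∀ n : ℤ, n • δ < e}
  zero_mem' := fun n => by simpa using he
  add_mem' := by
    intro x y hx hy n
    have hx2 := hx (2 * n)
    have hy2 := hy (2 * n)
    rw [smul_add]
    rcases le_total (n • x) (n • y) with h | h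
    · calc n • x + n • y ≤ n • y + n • y := add_le_add_left h _
        _ = (2 * n) • y := by rw [mul_zsmul]; rw [two_zsmul]
        _ < e := hy2
    · calc n • x + n • y ≤ n • x + n • x := add_le_add_right h _
        _ = (2 * n) • x := by rw [mul_zsmul]; rw [two_zsmul]
        _ < e := hx2
  neg_mem' := by
    intro x hx n
    have := hx (-n)
    simpa using this

lemma mem_mkDelta {e : Γ} {he : 0 < e} {x : Γ} :
    x ∈ mkDelta e he ↔ ∀ n : ℤ, n • x < e := Iff.rfl

lemma mkDelta_convex (e : Γ) (he : 0 < e) :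
    ∀ a ∈ mkDelta e he, ∀ b ∈ mkDelta e he, ∀ c : Γ, a ≤ c → c ≤ b → c ∈ mkDelta e he := by
  intro a ha b hb c hac hcb n
  rcases le_or_gt 0 n with hn | hn
  · exact lt_of_le_of_lt (zsmul_le_zsmul_right hn hcb) (hb n)
  · have h0 : n • c ≤ n • a := by
      have h1 : (-n) • a ≤ (-n) • c := zsmul_le_zsmul_right (by omega) hac
      have h2 : -(n • a) ≤ -(n • c) := by simpa [neg_zsmul] using h1
      exact neg_le_neg_iff.mp h2
    exact lt_of_le_of_lt h0 (ha n)

end Aux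

/-- Let `(Γ, ψ)` be an H-asymptotic couple with asymptotic integration and
contraction map `χ`, and `S ⊆ Γ` nonempty, convex, without a greatest element, with the
yardstick property. Then `S` is jammed iff its downward closure equals `Γ^{<0}`. -/
theorem stmt_14 {Γ : Type*} [AddCommGroup Γ] [LinearOrder Γ] [IsOrderedAddMonoid Γ] (ψ : Γ → Γ)
    (AC1 : ∀ α β : Γ, α ≠ 0 → β ≠ 0 → α + β ≠ 0 → min (ψ α) (ψ β) ≤ ψ (α + β))
    (AC2 : ∀ (α : Γ) (k : ℤ), α ≠ 0 → k ≠ 0 → ψ (k • α) = ψ α)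
    (AC3 : ∀ α β : Γ, 0 < α → β ≠ 0 → ψ β < α + ψ α)
    (HC : ∀ α β : Γ, 0 < α → α ≤ β → ψ β ≤ ψ α)
    (int : Γ → Γ)
    (hint : ∀ α : Γ, int α ≠ 0 ∧ int α + ψ (int α) = α)
    (χ : Γ → Γ) (hχ0 : χ 0 = 0) (hχ : ∀ γ : Γ, γ ≠ 0 → χ γ = int (ψ γ))
    (S : Set Γ) (hS : S.Nonempty)
    (hconv : ∀ a ∈ S, ∀ b ∈ S, ∀ c : Γ, a ≤ c → c ≤ b → c ∈ S)
    (hnomax : ¬ ∃ m ∈ S, ∀ x ∈ S, x ≤ m)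
    (hyard : ∃ β ∈ S, ∀ γ ∈ S, β < γ → γ - χ γ ∈ S) :
    IsJammed S ↔ {x : Γ | ∃ a ∈ S, x ≤ a} = {x : Γ | x < 0} := by
  obtain ⟨β, hβS, hβ⟩ := hyard
  -- S has, above any element, a strictly larger element
  have hnm : ∀ m ∈ S, ∃ x ∈ S, m < x := by
    intro m hm
    by_contra h
    push_neg at h
    exact hnomax ⟨m, hm, fun x hx => h x hx⟩
  have pair : ∀ a ∈ S, ∀ b ∈ S, ∃ c ∈ S, a < c ∧ b < c := by
    intro a ha b hb
    rcases le_total a b with h | h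
    · obtain ⟨c, hc, hbc⟩ := hnm b hb
      exact ⟨c, hc, lt_of_le_of_lt h hbc, hbc⟩
    · obtain ⟨c, hc, hac⟩ := hnm a ha
      exact ⟨c, hc, hac, lt_of_le_of_lt h hac⟩
  constructor
  · rintro ⟨-, -, hJ3⟩
    -- key contradiction: no nonzero `w` can (eventually) bound `|γ|` from below on S
    have key : ∀ w : Γ, w ≠ 0 →
        (∀ γ₀ ∈ S, ∃ γ ∈ S, γ₀ < γ ∧ β < γ ∧ γ ≠ 0 ∧ |w| ≤ |γ|) → False := by
      intro w hw hall
      set c := int (ψ w) with hcdef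
      have hc0 : c < 0 := aux_int_psi_neg ψ int AC3 hint hw
      have hcne : c ≠ 0 := ne_of_lt hc0
      have he : (0 : Γ) < -c := neg_pos.mpr hc0
      -- the convex subgroup misses all the `χ γ` for `|γ| ≥ |w|`
      have hd : int (ψ c) ∈ mkDelta (-c) he := by
        rw [mem_mkDelta]
        intro n
        rcases eq_or_ne n 0 with rfl | hn
        · simpa using he
        · have hs := aux_small ψ int AC2 AC3 HC hint hcne hn
          calc n • int (ψ c) ≤ |n • int (ψ c)| := le_abs_self _
            _ < |c| := hs
            _ = -c := abs_of_neg hc0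
      have hΔne : mkDelta (-c) he ≠ ⊥ := by
        intro hbot
        rw [hbot, AddSubgroup.mem_bot] at hd
        exact (hint (ψ c)).1 hd
      obtain ⟨γ₀, hγ₀S, htail⟩ := hJ3 (mkDelta (-c) he) (mkDelta_convex (-c) he) hΔne
      obtain ⟨γ, hγS, hγγ₀, hγβ, hγne, hγw⟩ := hall γ₀ hγ₀S
      have hyd : γ - χ γ ∈ S := hβ γ hγS hγβ
      have hχγ : χ γ = int (ψ γ) := hχ γ hγne
      have hχγ0 : χ γ < 0 := by
        rw [hχγ]; exact aux_int_psi_neg ψ int AC3 hint hγne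
      have h1 : γ - γ₀ ∈ mkDelta (-c) he := htail γ hγS hγγ₀
      have h2 : (γ - χ γ) - γ₀ ∈ mkDelta (-c) he := by
        apply htail _ hyd
        have : γ < γ - χ γ := by
          have := lt_add_of_pos_right γ (neg_pos.mpr hχγ0)
          rwa [← sub_eq_add_neg] at this
        exact lt_trans hγγ₀ this
      have h3 : -χ γ ∈ mkDelta (-c) he := by
        have hsub := (mkDelta (-c) he).sub_mem h2 h1
        have hrw : ((γ - χ γ) - γ₀) - (γ - γ₀) = -χ γ := by abel
        rwa [hrw] at hsub
      have h4 : -χ γ < -c := by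
        have := (mem_mkDelta.mp h3) 1
        simpa using this
      have h5 : χ γ ≤ c := by
        rw [hχγ, hcdef]
        exact aux_int_mono ψ int AC1 AC3 hint (aux_psi_anti ψ AC2 HC hw hγne hγw)
      have h6 : c < χ γ := by
        have := neg_lt_neg h4
        simpa using this
      exact absurd h5 (not_le.mpr h6)
    -- (A) every element of S is negative
    have hneg : ∀ a ∈ S, a < 0 := by
      intro a haS
      by_contra h
      push_neg at h
      obtain ⟨g, hgS, hga, hgβ⟩ := pair a haS β hβS
      have hgpos : 0 < g := lt_of_le_of_lt h hga
      apply key g (ne_of_gt hgpos)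
      intro γ₀ hγ₀
      obtain ⟨γ, hγS, h1, h2⟩ := pair γ₀ hγ₀ g hgS
      exact ⟨γ, hγS, h1, lt_trans hgβ h2, ne_of_gt (lt_trans hgpos h2), by
        rw [abs_of_pos hgpos, abs_of_pos (lt_trans hgpos h2)]; exact le_of_lt h2⟩
    -- (B) S is cofinal in the negatives
    have hup : ∀ x : Γ, x < 0 → ∃ a ∈ S, x ≤ a := by
      intro x hx
      by_contra h
      push_neg at h
      apply key x (ne_of_lt hx)
      intro γ₀ hγ₀
      obtain ⟨γ, hγS, h1, h2⟩ := pair γ₀ hγ₀ β hβS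
      have hγx : γ < x := h γ hγS
      have hγ0 : γ < 0 := lt_trans hγx hx
      exact ⟨γ, hγS, h1, h2, ne_of_lt hγ0, by
        rw [abs_of_neg hx, abs_of_neg hγ0]; exact neg_le_neg (le_of_lt hγx)⟩
    ext x
    simp only [Set.mem_setOf_eq]
    constructor
    · rintro ⟨a, haS, hxa⟩
      exact lt_of_le_of_lt hxa (hneg a haS)
    · exact hup x
  · intro hEq
    refine ⟨hS, hnomax, ?_⟩
    intro Δ hΔconv hΔbot
    have hex : ∃ d ∈ Δ, d ≠ 0 := by
      by_contra h
      push_neg at h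
      exact hΔbot ((AddSubgroup.eq_bot_iff_forall _).mpr h)
    obtain ⟨d, hdΔ, hd0⟩ := hex
    have hd'Δ : |d| ∈ Δ := by
      rcases abs_cases d with ⟨he, _⟩ | ⟨he, _⟩
      · rw [he]; exact hdΔ
      · rw [he]; exact Δ.neg_mem hdΔ
    have hd'pos : (0 : Γ) < |d| := abs_pos.mpr hd0
    have hmem : -|d| ∈ {x : Γ | ∃ a ∈ S, x ≤ a} := by
      rw [hEq]
      exact neg_lt_zero.mpr hd'pos
    obtain ⟨γ₀, hγ₀S, hle⟩ := hmem
    refine ⟨γ₀, hγ₀S, ?_⟩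
    intro γ₁ hγ₁ hlt
    have hγ₁neg : γ₁ < 0 := by
      have hm : γ₁ ∈ {x : Γ | ∃ a ∈ S, x ≤ a} := ⟨γ₁, hγ₁, le_refl _⟩
      rw [hEq] at hm
      exact hm
    refine hΔconv 0 Δ.zero_mem |d| hd'Δ (γ₁ - γ₀) (sub_nonneg.mpr (le_of_lt hlt)) ?_
    calc γ₁ - γ₀ ≤ 0 - γ₀ := sub_le_sub_right (le_of_lt hγ₁neg) _
      _ = -γ₀ := by rw [zero_sub]
      _ ≤ |d| := neg_le.mp hle
end

section
/- Let (Γ, ψ) be an H-asymptotic couple with asymptotic integration and S ⊆ Γ a nonempty convex set without a greatest element, with either S ⊆ (Γ^{>0})′ or S ⊆ (Γ^{<0})′, having the derived yardstick property. Then ∫S := {∫s : s ∈ S} is nonempty, convex, has no greatest element, and has the yardstick property. -/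
/-- Let `(Γ, ψ)` be an H-asymptotic couple with asymptotic integration and
`S ⊆ Γ` nonempty, convex, without a greatest element, with `S ⊆ (Γ^{>0})'` or
`S ⊆ (Γ^{<0})'`, having the derived yardstick property. Then `∫S = int '' S` is
nonempty, convex, has no greatest element, and has the yardstick property. Here `int α`
is the unique nonzero `β` with `β + ψ β = α`, `s γ = ψ (int γ)` (so `∫ s γ` is
`int (ψ (int γ))`), and `χ` is the contraction map. -/
theorem stmt_15 {Γ : Type*} [AddCommGroup Γ] [LinearOrder Γ] [IsOrderedAddMonoid Γ] (ψ : Γ → Γ)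
    (AC1 : ∀ α β : Γ, α ≠ 0 → β ≠ 0 → α + β ≠ 0 → min (ψ α) (ψ β) ≤ ψ (α + β))
    (AC2 : ∀ (α : Γ) (k : ℤ), α ≠ 0 → k ≠ 0 → ψ (k • α) = ψ α)
    (AC3 : ∀ α β : Γ, 0 < α → β ≠ 0 → ψ β < α + ψ α)
    (HC : ∀ α β : Γ, 0 < α → α ≤ β → ψ β ≤ ψ α)
    (int : Γ → Γ)
    (hint : ∀ α : Γ, int α ≠ 0 ∧ int α + ψ (int α) = α)
    (χ : Γ → Γ) (hχ0 : χ 0 = 0) (hχ : ∀ γ : Γ, γ ≠ 0 → χ γ = int (ψ γ))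
    (S : Set Γ) (hS : S.Nonempty)
    (hconv : ∀ a ∈ S, ∀ b ∈ S, ∀ c : Γ, a ≤ c → c ≤ b → c ∈ S)
    (hnomax : ¬ ∃ m ∈ S, ∀ x ∈ S, x ≤ m)
    (hsub : (∀ α ∈ S, ∃ γ : Γ, 0 < γ ∧ γ + ψ γ = α) ∨
            (∀ α ∈ S, ∃ γ : Γ, γ < 0 ∧ γ + ψ γ = α))
    (hdy : ∃ β ∈ S, ∀ γ ∈ S, β < γ →
      γ - int (ψ (int γ)) ∈ S ∧ β < γ - int (ψ (int γ))) :
    (int '' S).Nonempty ∧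
    (∀ a ∈ int '' S, ∀ b ∈ int '' S, ∀ c : Γ, a ≤ c → c ≤ b → c ∈ int '' S) ∧
    (¬ ∃ m ∈ int '' S, ∀ x ∈ int '' S, x ≤ m) ∧
    (∃ β ∈ int '' S, ∀ γ ∈ int '' S, β < γ → γ - χ γ ∈ int '' S) := by
  -- ψ(-β) = ψ β
  have hneg : ∀ β : Γ, β ≠ 0 → ψ (-β) = ψ β := by
    intro β hβ
    have := AC2 β (-1) hβ (by norm_num)
    simpa using this
  -- strict monotonicity of γ ↦ γ + ψ γ on nonzero elements
  have hmono : ∀ α β : Γ, α ≠ 0 → β ≠ 0 → α < β → α + ψ α < β + ψ β := by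
    intro α β hα hβ hlt
    rcases le_or_gt (ψ α) (ψ β) with h | h
    · exact add_lt_add_of_lt_of_le hlt h
    · have hδ : β - α ≠ 0 := sub_ne_zero.mpr (ne_of_gt hlt)
      have h1 : min (ψ α) (ψ (β - α)) ≤ ψ (α + (β - α)) :=
        AC1 α (β - α) hα hδ (by rw [add_sub_cancel]; exact hβ)
      rw [add_sub_cancel] at h1
      have h2 : ψ (β - α) ≤ ψ β := by
        rcases le_total (ψ α) (ψ (β - α)) with hc | hc
        · rw [min_eq_left hc] at h1; exact absurd h1 (not_le.mpr h)
        · rwa [min_eq_right hc] at h1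
      have h3 : ψ α < (β - α) + ψ (β - α) := AC3 (β - α) α (sub_pos.mpr hlt) hα
      have h4 : ψ α < (β - α) + ψ β := lt_of_lt_of_le h3 (add_le_add_right h2 _)
      calc α + ψ α < α + ((β - α) + ψ β) := add_lt_add_right h4 α
        _ = β + ψ β := by abel
  have hmono' : ∀ α β : Γ, α ≠ 0 → β ≠ 0 → α ≤ β → α + ψ α ≤ β + ψ β := by
    intro α β hα hβ hle
    rcases eq_or_lt_of_le hle with rfl | h
    · exact le_rfl
    · exact le_of_lt (hmono α β hα hβ h)
  -- uniqueness: int is the inverse of γ ↦ γ + ψ γ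
  have huniq : ∀ α β : Γ, β ≠ 0 → β + ψ β = α → β = int α := by
    intro α β hβ hβα
    obtain ⟨hi0, hi⟩ := hint α
    rcases lt_trichotomy β (int α) with h | h | h
    · have := hmono β (int α) hβ hi0 h
      rw [hβα, hi] at this; exact absurd this (lt_irrefl α)
    · exact h
    · have := hmono (int α) β hi0 hβ h
      rw [hβα, hi] at this; exact absurd this (lt_irrefl α)
  -- int (ψ α) < 0 for α ≠ 0
  have hψsmall : ∀ α : Γ, α ≠ 0 → int (ψ α) < 0 := by
    intro α hα
    obtain ⟨hc0, hc⟩ := hint (ψ α)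
    rcases lt_trichotomy (int (ψ α)) 0 with h | h | h
    · exact h
    · exact absurd h hc0
    · have := AC3 (int (ψ α)) α h hα
      rw [hc] at this; exact absurd this (lt_irrefl (ψ α))
  -- ultrametric equality
  have hultra : ∀ α β : Γ, α ≠ 0 → β ≠ 0 → ψ α < ψ β → ψ (α + β) = ψ α := by
    intro α β hα hβ hlt
    have hab : α + β ≠ 0 := by
      intro h
      have hbe : β = -α := eq_neg_of_add_eq_zero_right h
      rw [hbe, hneg α hα] at hlt; exact absurd hlt (lt_irrefl (ψ α))
    have h1 : min (ψ α) (ψ β) ≤ ψ (α + β) := AC1 α β hα hβ hab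
    rw [min_eq_left (le_of_lt hlt)] at h1
    have h2 : min (ψ (α + β)) (ψ (-β)) ≤ ψ (α + β + -β) :=
      AC1 (α + β) (-β) hab (neg_ne_zero.mpr hβ) (by simpa using hα)
    rw [add_neg_cancel_right, hneg β hβ] at h2
    have h3 : ψ (α + β) ≤ ψ α := by
      rcases le_total (ψ (α + β)) (ψ β) with hc | hc
      · rwa [min_eq_left hc] at h2
      · rw [min_eq_right hc] at h2; exact absurd h2 (not_le.mpr hlt)
    exact le_antisymm h3 h1
  refine ⟨?_, ?_, ?_, ?_⟩
  · -- nonempty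
    obtain ⟨s, hs⟩ := hS
    exact ⟨int s, s, hs, rfl⟩
  · -- convex
    rintro a ⟨s1, hs1, rfl⟩ b ⟨s2, hs2, rfl⟩ c hac hcb
    obtain ⟨h10, h1e⟩ := hint s1
    obtain ⟨h20, h2e⟩ := hint s2
    have hc0 : c ≠ 0 := by
      rcases hsub with hp | hp
      · obtain ⟨γ, hγpos, hγ⟩ := hp s1 hs1
        have : γ = int s1 := huniq s1 γ (ne_of_gt hγpos) hγ
        have : (0:Γ) < int s1 := this ▸ hγpos
        exact ne_of_gt (lt_of_lt_of_le this hac)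
      · obtain ⟨γ, hγneg, hγ⟩ := hp s2 hs2
        have : γ = int s2 := huniq s2 γ (ne_of_lt hγneg) hγ
        have : int s2 < 0 := this ▸ hγneg
        exact ne_of_lt (lt_of_le_of_lt hcb this)
    have hl : s1 ≤ c + ψ c := by
      have := hmono' (int s1) c h10 hc0 hac
      rwa [h1e] at this
    have hr : c + ψ c ≤ s2 := by
      have := hmono' c (int s2) hc0 h20 hcb
      rwa [h2e] at this
    have hmem : c + ψ c ∈ S := hconv s1 hs1 s2 hs2 (c + ψ c) hl hr
    exact ⟨c + ψ c, hmem, (huniq (c + ψ c) c hc0 rfl).symm⟩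
  · -- no greatest element
    rintro ⟨m, ⟨s, hsS, rfl⟩, hmax⟩
    apply hnomax
    refine ⟨s, hsS, fun x hx => ?_⟩
    have h1 : int x ≤ int s := hmax (int x) ⟨x, hx, rfl⟩
    have := hmono' (int x) (int s) (hint x).1 (hint s).1 h1
    rw [(hint x).2, (hint s).2] at this
    exact this
  · -- yardstick property
    obtain ⟨β0, hβ0S, hβ0⟩ := hdy
    refine ⟨int β0, ⟨β0, hβ0S, rfl⟩, ?_⟩
    rintro γ ⟨g, hgS, rfl⟩ hlt
    have hβg : β0 < g := by
      have := hmono (int β0) (int g) (hint β0).1 (hint g).1 hlt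
      rwa [(hint β0).2, (hint g).2] at this
    obtain ⟨hmem, _⟩ := hβ0 g hgS hβg
    have ha0 : int g ≠ 0 := (hint g).1
    set a := int g with ha
    set c := int (ψ a) with hcdef
    have hc0 : c ≠ 0 := (hint (ψ a)).1
    have hceq : c + ψ c = ψ a := (hint (ψ a)).2
    have hcneg : c < 0 := hψsmall a ha0
    have hψc : ψ a < ψ c := by
      calc ψ a = c + ψ c := hceq.symm
        _ < 0 + ψ c := add_lt_add_left hcneg _
        _ = ψ c := zero_add _
    have hac0 : a - c ≠ 0 := by
      intro h
      rw [sub_eq_zero.mp h] at hψc; exact absurd hψc (lt_irrefl (ψ c))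
    have hψac : ψ (a - c) = ψ a := by
      have := hultra a (-c) ha0 (neg_ne_zero.mpr hc0)
        (by rw [hneg c hc0]; exact hψc)
      rwa [← sub_eq_add_neg] at this
    have heq : (a - c) + ψ (a - c) = g - c := by
      have hg : a + ψ a = g := (hint g).2
      rw [hψac, ← hg]; abel
    rw [hχ (int g) ha0]
    exact ⟨g - c, hmem, (huniq (g - c) (a - c) hac0 heq).symm⟩
end

section
/- Let K be a valued field, L an immediate valued field extension of K, a ∈ L∖K, and (a_ρ) a pc-sequence in K of transcendental type over K with a_ρ ⇝ a. Let R(X) ∈ K(X)∖K be a nonconstant rational function. Then eventually R(a_ρ) is defined and lies in K, R(a_ρ) ⇝ R(a), and (R(a_ρ)) is a divergent pc-sequence in K (it has no pseudolimit in K). -/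
set_option linter.unusedSectionVars false
set_option linter.unusedVariables false
set_option maxHeartbeats 1000000

open Polynomial Finset

namespace Stmt17

variable {K : Type*} [Field K] {Γ₀ : Type*} [LinearOrderedCommGroupWithZero Γ₀]
variable {I : Type*} [LinearOrder I] [Nonempty I] [NoMaxOrder I]
variable {L : Type*} [Field L]

lemma exists_chain (m : I) : ∃ s : ℕ → I, StrictMono s ∧ m < s 0 := by
  have h : ∀ x : I, ∃ y, x < y := fun x => exists_gt x
  choose f hf using h
  refine ⟨fun n => f^[n + 1] m, strictMono_nat_of_lt_succ fun n => ?_, ?_⟩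
  · rw [Function.iterate_succ_apply' f (n+1) m]
    exact hf _
  · show m < f^[1] m
    rw [Function.iterate_one]
    exact hf m

lemma not_eventually_root (a : I → K)
    (hinj : ∃ ρ₀ : I, ∀ ρ σ : I, ρ₀ < ρ → ρ < σ → a ρ ≠ a σ)
    {E : K[X]} (hE : E ≠ 0) (ρ₁ : I) :
    ¬ (∀ ρ, ρ₁ < ρ → E.eval (a ρ) = 0) := by
  intro h
  obtain ⟨ρ₀, hinj⟩ := hinj
  obtain ⟨s, hs, hs0⟩ := exists_chain (max ρ₀ ρ₁)
  have hsm : ∀ m : ℕ, max ρ₀ ρ₁ < s m :=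
    fun m => hs0.trans_le (hs.monotone (Nat.zero_le m))
  have key : ∀ m n : ℕ, m < n → a (s m) ≠ a (s n) := fun m n hmn =>
    hinj _ _ ((le_max_left ρ₀ ρ₁).trans_lt (hsm m)) (hs hmn)
  apply hE
  apply Polynomial.eq_zero_of_infinite_isRoot
  apply Set.infinite_of_injective_forall_mem (f := fun n : ℕ => a (s n))
  · intro m n hmn
    by_contra hne
    rcases Ne.lt_or_gt hne with h' | h'
    · exact key _ _ h' hmn
    · exact key _ _ h' hmn.symm
  · intro n
    exact h (s n) ((le_max_right ρ₀ ρ₁).trans_lt (hsm n))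

lemma ev_const (v : Valuation K Γ₀) (a : I → K)
    (hinj : ∃ ρ₀ : I, ∀ ρ σ : I, ρ₀ < ρ → ρ < σ → a ρ ≠ a σ)
    (htrans : ∀ P : Polynomial K, 1 ≤ P.degree →
      ∃ (ρ₀ : I) (c : Γ₀), ∀ ρ : I, ρ₀ < ρ → v (P.eval (a ρ)) = c)
    (E : K[X]) :
    ∃ (ρ₁ : I) (c : Γ₀), (∀ ρ, ρ₁ < ρ → v (E.eval (a ρ)) = c) ∧ (E ≠ 0 → c ≠ 0) := by
  by_cases h0 : E.natDegree = 0
  · refine ⟨Classical.arbitrary I, v (E.coeff 0), fun ρ _ => ?_, fun hE => ?_⟩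
    · conv_lhs => rw [Polynomial.eq_C_of_natDegree_eq_zero h0]
      rw [eval_C]
    · rw [Ne, Valuation.zero_iff]
      intro hc
      apply hE
      rw [Polynomial.eq_C_of_natDegree_eq_zero h0, hc, map_zero]
  · have hE0 : E ≠ 0 := fun h => h0 (by simp [h])
    have hdeg : 1 ≤ E.degree := by
      rw [degree_eq_natDegree hE0]
      exact_mod_cast Nat.one_le_iff_ne_zero.mpr h0
    obtain ⟨ρ₀, c, hc⟩ := htrans E hdeg
    refine ⟨ρ₀, c, hc, fun hE hc0 => ?_⟩
    apply not_eventually_root a hinj hE ρ₀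
    intro ρ hρ
    have := hc ρ hρ
    rw [hc0] at this
    exact (Valuation.zero_iff v).mp this


lemma hasseDeriv_map (φ : K →+* L) (k : ℕ) (f : K[X]) :
    (f.map φ).hasseDeriv k = (f.hasseDeriv k).map φ := by
  ext n
  simp [Polynomial.hasseDeriv_coeff, Polynomial.coeff_map, map_mul, map_natCast]

lemma taylor_expand (f : L[X]) (x s : L) {n : ℕ} (h : f.natDegree ≤ n) :
    f.eval s = ∑ i ∈ Finset.range (n + 1), (f.hasseDeriv i).eval x * (s - x) ^ i := by
  conv_lhs => rw [← Polynomial.taylor_eval_sub x f s]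
  rw [Polynomial.eval_eq_sum_range' (n := n + 1) (by rw [Polynomial.natDegree_taylor]; omega)]
  exact Finset.sum_congr rfl fun i _ => by rw [Polynomial.taylor_coeff]

lemma taylor_expand_map (φ : K →+* L) (f : K[X]) (x : K) (s : L) {n : ℕ}
    (h : f.natDegree ≤ n) :
    (f.map φ).eval s =
      ∑ i ∈ Finset.range (n + 1), φ ((f.hasseDeriv i).eval x) * (s - φ x) ^ i := by
  rw [taylor_expand (f.map φ) (φ x) s (n := n) (by rw [Polynomial.natDegree_map]; exact h)]
  refine Finset.sum_congr rfl fun i _ => ?_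
  congr 1
  rw [hasseDeriv_map, Polynomial.eval_map, Polynomial.eval₂_at_apply]

lemma range_succ_split {M : Type*} [AddCommMonoid M] (f : ℕ → M) (n : ℕ) :
    ∑ i ∈ Finset.range (n + 1), f i = f 0 + ∑ i ∈ Finset.Icc 1 n, f i := by
  rw [Finset.range_eq_Ico, Finset.sum_eq_sum_Ico_succ_bot (Nat.succ_pos n), Nat.succ_eq_add_one, Finset.Ico_add_one_right_eq_Icc]

lemma exists_wronskian_ne_zero (R : RatFunc K) (hR : ∀ c : K, R ≠ RatFunc.C c) :
    ∃ i, 1 ≤ i ∧ i ≤ R.num.natDegree + R.denom.natDegree ∧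
      R.denom * (R.num.hasseDeriv i) - R.num * (R.denom.hasseDeriv i) ≠ 0 := by
  by_contra h
  push_neg at h
  have hall : ∀ i, 1 ≤ i →
      R.denom * (R.num.hasseDeriv i) = R.num * (R.denom.hasseDeriv i) := by
    intro i hi
    by_cases hin : i ≤ R.num.natDegree + R.denom.natDegree
    · exact sub_eq_zero.mp (h i hi hin)
    · push_neg at hin
      rw [Polynomial.hasseDeriv_eq_zero_of_lt_natDegree _ i (by omega),
          Polynomial.hasseDeriv_eq_zero_of_lt_natDegree _ i (by omega), mul_zero, mul_zero]
  have hcop : IsCoprime R.denom R.num := (RatFunc.isCoprime_num_denom R).symm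
  have hD : ∀ i, 1 ≤ i → R.denom.hasseDeriv i = 0 := by
    intro i hi
    by_cases h0 : R.denom.natDegree = 0
    · conv_lhs => rw [Polynomial.eq_C_of_natDegree_eq_zero h0]
      exact Polynomial.hasseDeriv_C i _ hi
    · by_contra hne
      have hdvd : R.denom ∣ R.num * R.denom.hasseDeriv i := ⟨_, (hall i hi).symm⟩
      have hdvd2 : R.denom ∣ R.denom.hasseDeriv i := hcop.dvd_of_dvd_mul_left hdvd
      have h1 := Polynomial.natDegree_le_of_dvd hdvd2 hne
      have h2 := Polynomial.natDegree_hasseDeriv_le R.denom i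
      omega
  have hDdeg : R.denom.natDegree = 0 := by
    by_contra h0
    have hc := congrArg (fun p => Polynomial.coeff p 0) (hD R.denom.natDegree (by omega))
    simp only [Polynomial.hasseDeriv_coeff, zero_add, Nat.choose_self, Nat.cast_one, one_mul,
      Polynomial.coeff_zero] at hc
    exact R.denom_ne_zero (Polynomial.leadingCoeff_eq_zero.mp hc)
  have hD1 : R.denom = 1 := (Polynomial.Monic.natDegree_eq_zero
    (RatFunc.monic_denom R)).mp hDdeg
  have hN : ∀ i, 1 ≤ i → R.num.hasseDeriv i = 0 := by
    intro i hi
    have := hall i hi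
    rw [hD1, one_mul, Polynomial.hasseDeriv_apply_one i hi, mul_zero] at this
    exact this
  have hNdeg : R.num.natDegree = 0 := by
    by_contra h0
    have hc := congrArg (fun p => Polynomial.coeff p 0) (hN R.num.natDegree (by omega))
    simp only [Polynomial.hasseDeriv_coeff, zero_add, Nat.choose_self, Nat.cast_one, one_mul,
      Polynomial.coeff_zero] at hc
    have : R.num = 0 := Polynomial.leadingCoeff_eq_zero.mp hc
    have hR0 : R = 0 := RatFunc.num_eq_zero_iff.mp this
    exact hR 0 (by rw [hR0, map_zero])
  apply hR (R.num.coeff 0)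
  conv_lhs => rw [← RatFunc.num_div_denom R]
  rw [hD1, map_one, div_one]
  conv_lhs => rw [Polynomial.eq_C_of_natDegree_eq_zero hNdeg]
  exact RatFunc.algebraMap_C _


lemma sum_dominant (w : Valuation L Γ₀) (b : L) (y : I → L)
    {n : ℕ} (t : ℕ → I → L) (e : ℕ → Γ₀) (ρ₀ : I)
    (hdec : ∀ ρ σ : I, ρ₀ < ρ → ρ < σ → w (b - y σ) < w (b - y ρ))
    (hγne : ∀ ρ : I, ρ₀ < ρ → w (b - y ρ) ≠ 0)
    (hconst : ∀ i ∈ Finset.Icc 1 n, ∀ ρ : I, ρ₀ < ρ → w (t i ρ) = e i)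
    (hne : ∃ i ∈ Finset.Icc 1 n, e i ≠ 0) :
    ∃ ρ₁ : I, ρ₀ ≤ ρ₁ ∧ ∀ ρ σ : I, ρ₁ < ρ → ρ < σ →
      w (∑ i ∈ Finset.Icc 1 n, t i ρ * (b - y ρ) ^ i) ≠ 0 ∧
      w (∑ i ∈ Finset.Icc 1 n, t i σ * (b - y σ) ^ i) <
        w (∑ i ∈ Finset.Icc 1 n, t i ρ * (b - y ρ) ^ i) := by
  classical
  set γ : I → Γ₀ := fun ρ => w (b - y ρ) with hγ
  set S : Finset ℕ := (Finset.Icc 1 n).filter (fun i => e i ≠ 0) with hSdef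
  obtain ⟨i₁, hi₁, hi₁e⟩ := hne
  have hS : S.Nonempty := ⟨i₁, Finset.mem_filter.mpr ⟨hi₁, hi₁e⟩⟩
  have hγinj : ∀ ρ ρ' : I, ρ₀ < ρ → ρ₀ < ρ' → ρ ≠ ρ' → γ ρ ≠ γ ρ' := by
    intro ρ ρ' hρ hρ' hne'
    rcases hne'.lt_or_gt with h | h
    · exact (hdec ρ ρ' hρ h).ne'
    · exact (hdec ρ' ρ hρ' h).ne
  have hkey : ∀ i j : ℕ, i ∈ S → j ∈ S → i ≠ j → ∀ ρ ρ' : I, ρ₀ < ρ → ρ₀ < ρ' →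
      e i * γ ρ ^ i = e j * γ ρ ^ j → e i * γ ρ' ^ i = e j * γ ρ' ^ j → ρ = ρ' := by
    have aux : ∀ i j : ℕ, i ∈ S → j ∈ S → i < j → ∀ ρ : I, ρ₀ < ρ →
        e i * γ ρ ^ i = e j * γ ρ ^ j → e i = e j * γ ρ ^ (j - i) := by
      intro i j hi hj hij ρ hρ heq
      have hγρ : γ ρ ≠ 0 := hγne ρ hρ
      have : e i * γ ρ ^ i = e j * γ ρ ^ (j - i) * γ ρ ^ i := by
        rw [mul_assoc, ← pow_add]
        rw [Nat.sub_add_cancel hij.le]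
        exact heq
      exact mul_right_cancel₀ (pow_ne_zero _ hγρ) this
    have key2 : ∀ i j : ℕ, i ∈ S → j ∈ S → i < j → ∀ ρ ρ' : I, ρ₀ < ρ → ρ₀ < ρ' →
        e i * γ ρ ^ i = e j * γ ρ ^ j → e i * γ ρ' ^ i = e j * γ ρ' ^ j → ρ = ρ' := by
      intro i j hi hj hij ρ ρ' hρ hρ' h1 h2
      have hej : e j ≠ 0 := (Finset.mem_filter.mp hj).2
      have e1 := aux i j hi hj hij ρ hρ h1
      have e2 := aux i j hi hj hij ρ' hρ' h2
      have hpow : γ ρ ^ (j - i) = γ ρ' ^ (j - i) :=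
        mul_left_cancel₀ hej (e1.symm.trans e2)
      have hγeq : γ ρ = γ ρ' := by
        have hji : j - i ≠ 0 := Nat.sub_ne_zero_of_lt hij
        exact (pow_left_strictMonoOn₀ hji).injOn (Set.mem_setOf.mpr zero_le')
          (Set.mem_setOf.mpr zero_le') hpow
      by_contra hne'
      exact hγinj ρ ρ' hρ hρ' hne' hγeq
    intro i j hi hj hij ρ ρ' hρ hρ' h1 h2
    rcases hij.lt_or_gt with h | h
    · exact key2 i j hi hj h ρ ρ' hρ hρ' h1 h2
    · exact key2 j i hj hi h ρ ρ' hρ hρ' h1.symm h2.symm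
  set B : Set I := {ρ : I | ρ₀ < ρ ∧ ∃ p : ℕ × ℕ, p.1 ∈ S ∧ p.2 ∈ S ∧ p.1 ≠ p.2 ∧
      e p.1 * γ ρ ^ p.1 = e p.2 * γ ρ ^ p.2} with hBdef
  have hBfin : B.Finite := by
    have hch : ∀ ρ : B, ∃ p : ℕ × ℕ, p.1 ∈ S ∧ p.2 ∈ S ∧ p.1 ≠ p.2 ∧
        e p.1 * γ (ρ : I) ^ p.1 = e p.2 * γ (ρ : I) ^ p.2 := fun ρ => ρ.2.2
    choose p hp1 hp2 hp3 hp4 using hch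
    have hpinj : Function.Injective p := by
      intro ρ ρ' h
      apply Subtype.ext
      refine hkey (p ρ).1 (p ρ).2 (hp1 ρ) (hp2 ρ) (hp3 ρ) ρ ρ' ρ.2.1 ρ'.2.1 (hp4 ρ) ?_
      rw [h]
      exact hp4 ρ'
    have hinj2 : Function.Injective (fun ρ : B => (⟨p ρ, Finset.mem_product.mpr ⟨hp1 ρ, hp2 ρ⟩⟩ :
        (S ×ˢ S : Finset (ℕ × ℕ)))) := by
      intro ρ ρ' h
      exact hpinj (congrArg Subtype.val h)
    exact Set.finite_coe_iff.mp (Finite.of_injective _ hinj2)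
  obtain ⟨m, hm⟩ := hBfin.bddAbove
  refine ⟨max m ρ₀, le_max_right _ _, ?_⟩
  have hgood : ∀ ρ : I, max m ρ₀ < ρ → ∀ i ∈ S, ∀ j ∈ S, i ≠ j →
      e i * γ ρ ^ i ≠ e j * γ ρ ^ j := by
    intro ρ hρ i hi j hj hij heq
    have : ρ ∈ B := ⟨(le_max_right m ρ₀).trans_lt hρ, ⟨(i, j), hi, hj, hij, heq⟩⟩
    exact absurd (hm this) (not_le.mpr ((le_max_left m ρ₀).trans_lt hρ))
  have main : ∀ ρ : I, max m ρ₀ < ρ → ∃ i₀ ∈ S,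
      (∀ j ∈ S, e j * γ ρ ^ j ≤ e i₀ * γ ρ ^ i₀) ∧
      w (∑ i ∈ Finset.Icc 1 n, t i ρ * (b - y ρ) ^ i) = e i₀ * γ ρ ^ i₀ := by
    intro ρ hρ
    have hρ₀ : ρ₀ < ρ := (le_max_right m ρ₀).trans_lt hρ
    obtain ⟨i₀, hi₀S, hi₀max⟩ := Finset.exists_max_image S (fun i => e i * γ ρ ^ i) hS
    refine ⟨i₀, hi₀S, hi₀max, ?_⟩
    have hi₀Icc : i₀ ∈ Finset.Icc 1 n := Finset.mem_of_mem_filter i₀ hi₀S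
    have hi₀e : e i₀ ≠ 0 := (Finset.mem_filter.mp hi₀S).2
    have hM0 : e i₀ * γ ρ ^ i₀ ≠ 0 := mul_ne_zero hi₀e (pow_ne_zero _ (hγne ρ hρ₀))
    have hterm : ∀ i ∈ Finset.Icc 1 n, w (t i ρ * (b - y ρ) ^ i) = e i * γ ρ ^ i := by
      intro i hi
      rw [map_mul, map_pow, hconst i hi ρ hρ₀]
    rw [← Finset.add_sum_erase _ _ hi₀Icc]
    rw [Valuation.map_add_eq_of_lt_left]
    · exact hterm i₀ hi₀Icc
    · rw [hterm i₀ hi₀Icc]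
      apply Valuation.map_sum_lt w hM0
      intro i hi
      have hiIcc : i ∈ Finset.Icc 1 n := Finset.mem_of_mem_erase hi
      have hine : i ≠ i₀ := Finset.ne_of_mem_erase hi
      rw [hterm i hiIcc]
      by_cases hie : e i = 0
      · rw [hie, zero_mul]
        exact zero_lt_iff.mpr hM0
      · have hiS : i ∈ S := Finset.mem_filter.mpr ⟨hiIcc, hie⟩
        exact lt_of_le_of_ne (hi₀max i hiS) (hgood ρ hρ i hiS i₀ hi₀S hine)
  intro ρ σ hρ hσ
  have hρσ : max m ρ₀ < σ := hρ.trans hσ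
  have hρ₀ : ρ₀ < ρ := (le_max_right m ρ₀).trans_lt hρ
  obtain ⟨i₀, hi₀S, hi₀max, hwρ⟩ := main ρ hρ
  obtain ⟨j₀, hj₀S, _, hwσ⟩ := main σ hρσ
  have hi₀e : e i₀ ≠ 0 := (Finset.mem_filter.mp hi₀S).2
  have hj₀e : e j₀ ≠ 0 := (Finset.mem_filter.mp hj₀S).2
  have hj₀pos : j₀ ≠ 0 := by
    have := (Finset.mem_Icc.mp (Finset.mem_of_mem_filter j₀ hj₀S)).1
    omega
  constructor
  · rw [hwρ]
    exact mul_ne_zero hi₀e (pow_ne_zero _ (hγne ρ hρ₀))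
  · rw [hwρ, hwσ]
    calc e j₀ * γ σ ^ j₀ < e j₀ * γ ρ ^ j₀ := by
          apply mul_lt_mul_of_pos_left _ (zero_lt_iff.mpr hj₀e)
          exact pow_lt_pow_left₀ (hdec ρ σ hρ₀ hσ) zero_le' hj₀pos
      _ ≤ e i₀ * γ ρ ^ i₀ := hi₀max j₀ hj₀S


lemma div_lt_div_of_lt {u u' c : Γ₀} (hc : c ≠ 0) (h : u < u') : u / c < u' / c := by
  rw [div_eq_mul_inv, div_eq_mul_inv, mul_comm u, mul_comm u']
  exact mul_lt_mul_of_pos_left h (zero_lt_iff.mpr (inv_ne_zero hc))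

end Stmt17

/-- Let `K` be a valued field, `L` an immediate valued field extension,
`b ∈ L∖K`, and `(a ρ)` a pc-sequence in `K` of transcendental type over `K` with
`a ρ ⇝ b`. Let `R ∈ K(X)∖K` be a nonconstant rational function. Then eventually
`R (a ρ)` is defined in `K`, `R (a ρ) ⇝ R b`, and `(R (a ρ))` is a divergent
pc-sequence in `K`. The valuation is multiplicative: `f ≺ g` iff `v f < v g`. -/
theorem stmt_17 {K L : Type*} [Field K] [Field L] [Algebra K L]
    {Γ₀ : Type*} [LinearOrderedCommGroupWithZero Γ₀]
    (v : Valuation K Γ₀) (w : Valuation L Γ₀)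
    (hext : ∀ x : K, w (algebraMap K L x) = v x)
    -- immediate extension: same value group and same residue field
    (hvalgrp : ∀ y : L, y ≠ 0 → ∃ x : K, x ≠ 0 ∧ w y = v x)
    (hres : ∀ y : L, w y ≤ 1 → ∃ x : K, w (y - algebraMap K L x) < 1)
    -- (a ρ): a well-indexed sequence in K
    {I : Type*} [LinearOrder I] [Nonempty I] [WellFoundedLT I] [NoMaxOrder I]
    (a : I → K)
    -- b ∈ L∖K
    (b : L) (hb : ∀ x : K, b ≠ algebraMap K L x)
    -- (a ρ) is a pc-sequence in K
    (hpc : ∃ ρ₀ : I, ∀ ρ σ τ : I, ρ₀ < ρ → ρ < σ → σ < τ →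
      v (a τ - a σ) < v (a σ - a ρ))
    -- a ρ ⇝ b
    (hlim : ∃ ρ₀ : I, ∀ ρ σ : I, ρ₀ < ρ → ρ < σ →
      w (b - algebraMap K L (a σ)) < w (b - algebraMap K L (a ρ)))
    -- (a ρ) is of transcendental type over K
    (htrans : ∀ P : Polynomial K, 1 ≤ P.degree →
      ∃ (ρ₀ : I) (c : Γ₀), ∀ ρ : I, ρ₀ < ρ → v (P.eval (a ρ)) = c)
    -- R ∈ K(X)∖K
    (R : RatFunc K) (hR : ∀ c : K, R ≠ RatFunc.C c) :
    -- eventually R (a ρ) is defined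
    (∃ ρ₀ : I, ∀ ρ : I, ρ₀ < ρ → R.denom.eval (a ρ) ≠ 0) ∧
    -- R (a ρ) ⇝ R b
    (∃ ρ₀ : I, ∀ ρ σ : I, ρ₀ < ρ → ρ < σ →
      w ((R.num.map (algebraMap K L)).eval b / (R.denom.map (algebraMap K L)).eval b -
          algebraMap K L (R.num.eval (a σ) / R.denom.eval (a σ))) <
      w ((R.num.map (algebraMap K L)).eval b / (R.denom.map (algebraMap K L)).eval b -
          algebraMap K L (R.num.eval (a ρ) / R.denom.eval (a ρ)))) ∧
    -- (R (a ρ)) is a pc-sequence in K ...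
    (∃ ρ₀ : I, ∀ ρ σ τ : I, ρ₀ < ρ → ρ < σ → σ < τ →
      v (R.num.eval (a τ) / R.denom.eval (a τ) - R.num.eval (a σ) / R.denom.eval (a σ)) <
      v (R.num.eval (a σ) / R.denom.eval (a σ) - R.num.eval (a ρ) / R.denom.eval (a ρ))) ∧
    -- ... which is divergent in K: it has no pseudolimit in K
    (¬ ∃ c : K, ∃ ρ₀ : I, ∀ ρ σ : I, ρ₀ < ρ → ρ < σ →
      v (c - R.num.eval (a σ) / R.denom.eval (a σ)) <
      v (c - R.num.eval (a ρ) / R.denom.eval (a ρ))) := by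
  classical
  obtain ⟨ρpc, hpc⟩ := hpc
  obtain ⟨ρlim, hlim⟩ := hlim
  set φ : K →+* L := algebraMap K L with hφdef
  have hinj : ∃ ρ₀ : I, ∀ ρ σ : I, ρ₀ < ρ → ρ < σ → a ρ ≠ a σ := by
    refine ⟨ρpc, fun ρ σ hρ hσ heq => ?_⟩
    obtain ⟨τ, hτ⟩ := exists_gt σ
    have h := hpc ρ σ τ hρ hσ hτ
    rw [← heq, sub_self, map_zero] at h
    exact not_lt_zero' h
  set N : Polynomial K := R.num with hN
  set D : Polynomial K := R.denom with hD
  set n : ℕ := N.natDegree + D.natDegree with hn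
  set E : ℕ → Polynomial K := fun i => D * N.hasseDeriv i - N * D.hasseDeriv i with hE
  obtain ⟨ρD, d₀, hd₀, hd₀ne'⟩ := Stmt17.ev_const v a hinj htrans D
  have hd₀ne : d₀ ≠ 0 := hd₀ne' (RatFunc.denom_ne_zero R)
  have part1 : ∀ ρ : I, ρD < ρ → D.eval (a ρ) ≠ 0 := by
    intro ρ hρ h0
    apply hd₀ne
    rw [← hd₀ ρ hρ, h0, map_zero]
  choose re e he hene using fun i => Stmt17.ev_const v a hinj htrans (E i)
  choose rd d hdc hdne using fun i => Stmt17.ev_const v a hinj htrans (D.hasseDeriv i)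
  obtain ⟨m₁, hm₁⟩ := (Set.finite_range fun i : Finset.Icc 1 n => re i).bddAbove
  obtain ⟨m₂, hm₂⟩ := (Set.finite_range fun i : Finset.Icc 1 n => rd i).bddAbove
  set ρ₀ : I := max (max (max ρpc ρlim) ρD) (max m₁ m₂) with hρ₀def
  have hρ₀lim : ρlim ≤ ρ₀ := le_max_of_le_left (le_max_of_le_left (le_max_right _ _))
  have hρ₀D : ρD ≤ ρ₀ := le_max_of_le_left (le_max_right _ _)
  have hρ₀m₁ : m₁ ≤ ρ₀ := le_max_of_le_right (le_max_left _ _)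
  have hρ₀m₂ : m₂ ≤ ρ₀ := le_max_of_le_right (le_max_right _ _)
  have hdec : ∀ ρ σ : I, ρ₀ < ρ → ρ < σ → w (b - φ (a σ)) < w (b - φ (a ρ)) :=
    fun ρ σ hρ hσ => hlim ρ σ (hρ₀lim.trans_lt hρ) hσ
  have hγne : ∀ ρ : I, ρ₀ < ρ → w (b - φ (a ρ)) ≠ 0 := by
    intro ρ hρ
    obtain ⟨σ, hσ⟩ := exists_gt ρ
    exact ((zero_le').trans_lt (hdec ρ σ hρ hσ)).ne'
  have heρ : ∀ i ∈ Finset.Icc 1 n, ∀ ρ : I, ρ₀ < ρ → w (φ ((E i).eval (a ρ))) = e i := by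
    intro i hi ρ hρ
    rw [hext, he i ρ (lt_of_le_of_lt (le_trans (hm₁ ⟨⟨i, hi⟩, rfl⟩) hρ₀m₁) hρ)]
  have hdρ : ∀ i ∈ Finset.Icc 1 n, ∀ ρ : I, ρ₀ < ρ →
      w (φ ((D.hasseDeriv i).eval (a ρ))) = d i := by
    intro i hi ρ hρ
    rw [hext, hdc i ρ (lt_of_le_of_lt (le_trans (hm₂ ⟨⟨i, hi⟩, rfl⟩) hρ₀m₂) hρ)]
  have hDaρ : ∀ ρ : I, ρ₀ < ρ → v (D.eval (a ρ)) = d₀ :=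
    fun ρ hρ => hd₀ ρ (hρ₀D.trans_lt hρ)
  have hDane : ∀ ρ : I, ρ₀ < ρ → D.eval (a ρ) ≠ 0 :=
    fun ρ hρ => part1 ρ (hρ₀D.trans_lt hρ)
  obtain ⟨i₁, hi₁1, hi₁n, hi₁ne⟩ := Stmt17.exists_wronskian_ne_zero R hR
  have hi₁Icc : i₁ ∈ Finset.Icc 1 n := Finset.mem_Icc.mpr ⟨hi₁1, hi₁n⟩
  have hene₁ : e i₁ ≠ 0 := hene i₁ hi₁ne
  obtain ⟨ρU, hρUge, hU⟩ := Stmt17.sum_dominant w b (fun ρ => φ (a ρ)) (n := n)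
    (fun i ρ => φ ((E i).eval (a ρ))) e ρ₀ hdec hγne heρ ⟨i₁, hi₁Icc, hene₁⟩
  have hNdeg : N.natDegree ≤ n := Nat.le_add_right _ _
  have hDdeg : D.natDegree ≤ n := Nat.le_add_left _ _
  have hVtaylor : ∀ ρ : I, (D.map φ).eval b = φ (D.eval (a ρ)) +
      ∑ i ∈ Finset.Icc 1 n, φ ((D.hasseDeriv i).eval (a ρ)) * (b - φ (a ρ)) ^ i := by
    intro ρ
    rw [Stmt17.taylor_expand_map φ D (a ρ) b (n := n) hDdeg, Stmt17.range_succ_split]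
    simp [Polynomial.hasseDeriv_zero']
  have hDb : (D.map φ).eval b ≠ 0 := by
    by_cases hSD : ∃ i ∈ Finset.Icc 1 n, d i ≠ 0
    · obtain ⟨ρV, hρVge, hV⟩ := Stmt17.sum_dominant w b (fun ρ => φ (a ρ)) (n := n)
        (fun i ρ => φ ((D.hasseDeriv i).eval (a ρ))) d ρ₀ hdec hγne hdρ hSD
      intro h0
      obtain ⟨ρ, hρ⟩ := exists_gt ρV
      obtain ⟨σ, hσ⟩ := exists_gt ρ
      have hWval : ∀ τ : I, ρV < τ → w (∑ i ∈ Finset.Icc 1 n,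
          φ ((D.hasseDeriv i).eval (a τ)) * (b - φ (a τ)) ^ i) = d₀ := by
        intro τ hτ
        have hτ₀ : ρ₀ < τ := hρVge.trans_lt hτ
        have h1 := hVtaylor τ
        rw [h0] at h1
        have h2 : (∑ i ∈ Finset.Icc 1 n, φ ((D.hasseDeriv i).eval (a τ)) * (b - φ (a τ)) ^ i)
            = - φ (D.eval (a τ)) := eq_neg_of_add_eq_zero_right h1.symm
        rw [h2, Valuation.map_neg, hext, hDaρ τ hτ₀]
      have h1 := (hV ρ σ hρ hσ).2
      rw [hWval ρ hρ, hWval σ (hρ.trans hσ)] at h1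
      exact lt_irrefl _ h1
    · push_neg at hSD
      obtain ⟨ρ, hρ⟩ := exists_gt ρ₀
      have hzero : ∀ i ∈ Finset.Icc 1 n,
          φ ((D.hasseDeriv i).eval (a ρ)) * (b - φ (a ρ)) ^ i = 0 := by
        intro i hi
        have h1 := hdρ i hi ρ hρ
        rw [hSD i hi] at h1
        rw [(w.zero_iff).mp h1, zero_mul]
      rw [hVtaylor ρ, Finset.sum_eq_zero hzero, add_zero]
      simpa using hDane ρ hρ
  set Rb : L := (N.map φ).eval b / (D.map φ).eval b with hRb
  set x : I → K := fun ρ => N.eval (a ρ) / D.eval (a ρ) with hx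
  have hkey : ∀ ρ : I, ρ₀ < ρ → Rb - φ (x ρ) =
      (∑ i ∈ Finset.Icc 1 n, φ ((E i).eval (a ρ)) * (b - φ (a ρ)) ^ i) /
        ((D.map φ).eval b * φ (D.eval (a ρ))) := by
    intro ρ hρ
    have hDa : φ (D.eval (a ρ)) ≠ 0 := by simpa using hDane ρ hρ
    rw [hRb, hx]
    simp only [map_div₀]
    rw [div_sub_div _ _ hDb hDa]
    congr 1
    rw [Stmt17.taylor_expand_map φ N (a ρ) b (n := n) hNdeg,
        Stmt17.taylor_expand_map φ D (a ρ) b (n := n) hDdeg,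
        Finset.sum_mul, Finset.sum_mul, ← Finset.sum_sub_distrib]
    have hterm : ∀ i ∈ Finset.range (n + 1),
        φ ((N.hasseDeriv i).eval (a ρ)) * (b - φ (a ρ)) ^ i * φ (D.eval (a ρ)) -
          φ ((D.hasseDeriv i).eval (a ρ)) * (b - φ (a ρ)) ^ i * φ (N.eval (a ρ)) =
        φ ((E i).eval (a ρ)) * (b - φ (a ρ)) ^ i := by
      intro i _
      rw [hE]
      simp only [Polynomial.eval_sub, Polynomial.eval_mul, map_sub, map_mul]
      ring
    rw [Finset.sum_congr rfl hterm, Stmt17.range_succ_split]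
    have h0 : φ ((E 0).eval (a ρ)) * (b - φ (a ρ)) ^ 0 = 0 := by
      have hE0 : E 0 = 0 := by
        rw [hE]
        simp [Polynomial.hasseDeriv_zero', mul_comm]
      rw [hE0]
      simp
    rw [h0, zero_add]
  set cst : Γ₀ := w ((D.map φ).eval b) * d₀ with hcst
  have hcstne : cst ≠ 0 := mul_ne_zero ((w.ne_zero_iff).mpr hDb) hd₀ne
  have hwval : ∀ ρ : I, ρU < ρ → w (Rb - φ (x ρ)) =
      w (∑ i ∈ Finset.Icc 1 n, φ ((E i).eval (a ρ)) * (b - φ (a ρ)) ^ i) / cst := by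
    intro ρ hρ
    have hρ' : ρ₀ < ρ := hρUge.trans_lt hρ
    rw [hkey ρ hρ', map_div₀, map_mul, hext, hDaρ ρ hρ', hcst]
  have part2 : ∀ ρ σ : I, ρU < ρ → ρ < σ → w (Rb - φ (x σ)) < w (Rb - φ (x ρ)) := by
    intro ρ σ hρ hσ
    obtain ⟨hUne, hUlt⟩ := hU ρ σ hρ hσ
    rw [hwval ρ hρ, hwval σ (hρ.trans hσ)]
    exact Stmt17.div_lt_div_of_lt hcstne hUlt
  have part3 : ∀ ρ σ τ : I, ρU < ρ → ρ < σ → σ < τ → v (x τ - x σ) < v (x σ - x ρ) := by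
    intro ρ σ τ h1 h2 h3
    have e1 : v (x τ - x σ) = w (Rb - φ (x σ)) := by
      rw [← hext, map_sub]
      have hre : φ (x τ) - φ (x σ) = (Rb - φ (x σ)) + -(Rb - φ (x τ)) := by ring
      rw [hre, Valuation.map_add_eq_of_lt_left]
      rw [Valuation.map_neg]
      exact part2 σ τ (h1.trans h2) h3
    have e2 : v (x σ - x ρ) = w (Rb - φ (x ρ)) := by
      rw [← hext, map_sub]
      have hre : φ (x σ) - φ (x ρ) = (Rb - φ (x ρ)) + -(Rb - φ (x σ)) := by ring
      rw [hre, Valuation.map_add_eq_of_lt_left]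
      rw [Valuation.map_neg]
      exact part2 ρ σ h1 h2
    rw [e1, e2]
    exact part2 ρ σ h1 h2
  have part4 : ¬ ∃ c : K, ∃ ρc : I, ∀ ρ σ : I, ρc < ρ → ρ < σ →
      v (c - x σ) < v (c - x ρ) := by
    rintro ⟨c, ρc, hc⟩
    set M : Polynomial K := Polynomial.C c * D - N with hM
    by_cases hM0 : M = 0
    · apply hR c
      have hNM : N = Polynomial.C c * D := by
        rw [hM] at hM0
        exact (sub_eq_zero.mp hM0).symm
      conv_lhs => rw [← RatFunc.num_div_denom R]
      rw [← hN, ← hD, hNM, map_mul, mul_div_assoc,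
        div_self (RatFunc.algebraMap_ne_zero (RatFunc.denom_ne_zero R)), mul_one,
        RatFunc.algebraMap_C]
    · obtain ⟨ρM, m₀, hm₀, hm₀ne'⟩ := Stmt17.ev_const v a hinj htrans M
      have hm₀ne : m₀ ≠ 0 := hm₀ne' hM0
      obtain ⟨ρ, hρ⟩ := exists_gt (max (max ρc ρM) ρ₀)
      obtain ⟨σ, hσ⟩ := exists_gt ρ
      have hval : ∀ τ : I, max (max ρc ρM) ρ₀ < τ → v (c - x τ) = m₀ / d₀ := by
        intro τ hτ
        have hτ₀ : ρ₀ < τ := (le_max_right _ _).trans_lt hτ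
        have hτM : ρM < τ :=
          ((le_max_right ρc ρM).trans (le_max_left _ _)).trans_lt hτ
        have hDne := hDane τ hτ₀
        have hcx : c - x τ = M.eval (a τ) / D.eval (a τ) := by
          rw [hx, hM]
          simp only [Polynomial.eval_sub, Polynomial.eval_mul, Polynomial.eval_C]
          field_simp
        rw [hcx, map_div₀, hm₀ τ hτM, hDaρ τ hτ₀]
      have h := hc ρ σ (((le_max_left ρc ρM).trans (le_max_left _ _)).trans_lt hρ) hσ
      rw [hval ρ hρ, hval σ (hρ.trans hσ)] at h
      exact lt_irrefl _ h
  exact ⟨⟨ρD, part1⟩, ⟨ρU, part2⟩, ⟨ρU, part3⟩, part4⟩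
end

section
/- Let K be a pre-differential-valued field of H-type with small integration, i.e., I(K) = ∂𝔬 where 𝔬 is the maximal ideal of the valuation ring 𝒪. Then K is differential-valued: 𝒪 = C + 𝔬, where C is the constant field. -/
/-- Let `K` be a pre-differential-valued field of H-type with small
integration: `I(K) = ∂𝔬`. Then `K` is differential-valued: `𝒪 = C + 𝔬`. The (additive)
valuation is `v : K → WithTop Γ` with `v x = ⊤ ↔ x = 0`; `𝒪 = {f : 0 ≤ v f}`,
`𝔬 = {f : 0 < v f}`, `C = {f : d f = 0}`, and `I(K) = {y : y ≼ f' for some f ∈ 𝒪}`. -/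
theorem stmt_18 {K Γ : Type*} [Field K] [AddCommGroup Γ] [LinearOrder Γ] [IsOrderedAddMonoid Γ]
    (v : K → WithTop Γ)
    (hv0 : ∀ x : K, v x = ⊤ ↔ x = 0) (hv1 : v 1 = 0)
    (hvmul : ∀ x y : K, v (x * y) = v x + v y)
    (hvadd : ∀ x y : K, min (v x) (v y) ≤ v (x + y))
    -- ℚ ⊆ 𝒪 (valued differential field convention; char 0 residue field)
    (hQ : ∀ n : ℕ, n ≠ 0 → v (n : K) = 0)
    (d : K → K)
    (hd_add : ∀ a b : K, d (a + b) = d a + d b)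
    (hd_mul : ∀ a b : K, d (a * b) = d a * b + a * d b)
    -- asymptotic field: for nonzero f, g ≺ 1: f ≺ g ↔ f' ≺ g'
    (hasymp : ∀ f g : K, f ≠ 0 → g ≠ 0 → 0 < v f → 0 < v g →
      (v g < v f ↔ v (d g) < v (d f)))
    -- pre-differential-valued: f ≼ 1, g ≺ 1 (g ≠ 0) imply f' ≺ g† = g'/g
    (hpdv : ∀ f g : K, g ≠ 0 → 0 ≤ v f → 0 < v g → v (d g) < v g + v (d f))
    -- H-type: 0 < v f ≤ v g implies ψ(v f) ≥ ψ(v g), i.e. v(f')−v(f) ≥ v(g')−v(g)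
    (hH : ∀ f g : K, f ≠ 0 → g ≠ 0 → 0 < v f → v f ≤ v g →
      v (d g) + v f ≤ v (d f) + v g)
    -- small integration: I(K) = ∂𝔬
    (hsmallint : ∀ y : K,
      (∃ f : K, 0 ≤ v f ∧ v (d f) ≤ v y) ↔ (∃ ε : K, 0 < v ε ∧ d ε = y)) :
    ∀ f : K, 0 ≤ v f → ∃ c ε : K, d c = 0 ∧ 0 < v ε ∧ f = c + ε := by
  intro f hf
  obtain ⟨ε, hε, hdε⟩ := (hsmallint (d f)).mp ⟨f, hf, le_refl _⟩
  refine ⟨f - ε, ε, ?_, hε, by ring⟩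
  have h0 : d 0 = 0 := by have := hd_add 0 0; simpa using this
  have hneg : d (-ε) = -(d ε) := by
    have := hd_add ε (-ε); rw [add_neg_cancel, h0] at this; linear_combination -this
  have : d (f - ε) = d f + d (-ε) := by rw [sub_eq_add_neg, hd_add]
  rw [this, hneg, hdε]; ring
end

section
/- Let K be a henselian pre-differential-valued field of H-type and s ∈ K with v(s) ∈ (Γ^{>0})′ and s ∉ ∂𝔬. Then the set S := {v(s − ε′) : ε ∈ K, ε ≺ 1} ⊆ (Γ^{>0})′ has no largest element and is downward closed in (Γ^{>0})′ (in particular, S is a convex subset of Γ). -/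
/-- Let `K` be a henselian pre-differential-valued field of H-type with
value group `Γ` and asymptotic couple map `ψ`, and `s ∈ K` with `v s ∈ (Γ^{>0})'` and
`s ∉ ∂𝔬`. Then `S = {v (s − ε') : ε ≺ 1} ⊆ (Γ^{>0})'` has no largest element and is
downward closed in `(Γ^{>0})'`; in particular it is convex. The (additive) valuation is
`v : K → WithTop Γ`, surjective onto `Γ`, and `ψ : Γ → Γ` satisfies
`v (d g) = v g + ψ (v g)` for `g` with `v g ≠ 0, ⊤`. -/
theorem stmt_19 {K Γ : Type*} [Field K] [AddCommGroup Γ] [LinearOrder Γ] [IsOrderedAddMonoid Γ]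
    (v : K → WithTop Γ)
    (hv0 : ∀ x : K, v x = ⊤ ↔ x = 0) (hv1 : v 1 = 0)
    (hvmul : ∀ x y : K, v (x * y) = v x + v y)
    (hvadd : ∀ x y : K, min (v x) (v y) ≤ v (x + y))
    (hvsurj : ∀ γ : Γ, ∃ x : K, v x = (γ : WithTop Γ))
    (hQ : ∀ n : ℕ, n ≠ 0 → v (n : K) = 0)
    (d : K → K)
    (hd_add : ∀ a b : K, d (a + b) = d a + d b)
    (hd_mul : ∀ a b : K, d (a * b) = d a * b + a * d b)
    -- asymptotic field
    (hasymp : ∀ f g : K, f ≠ 0 → g ≠ 0 → 0 < v f → 0 < v g →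
      (v g < v f ↔ v (d g) < v (d f)))
    -- pre-differential-valued
    (hpdv : ∀ f g : K, g ≠ 0 → 0 ≤ v f → 0 < v g → v (d g) < v g + v (d f))
    -- the asymptotic couple map ψ: ψ(v g) = v(g†), i.e. v (d g) = v g + ψ (v g)
    (ψ : Γ → Γ)
    (hψ : ∀ (g : K) (γ : Γ), γ ≠ 0 → v g = (γ : WithTop Γ) →
      v (d g) = ((γ + ψ γ : Γ) : WithTop Γ))
    -- H-type
    (HC : ∀ α β : Γ, 0 < α → α ≤ β → ψ β ≤ ψ α)
    -- henselian valuation ring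
    (hhens : ∀ P : Polynomial K, (∀ i : ℕ, 0 ≤ v (P.coeff i)) →
      ∀ a : K, 0 ≤ v a → 0 < v (P.eval a) →
        v ((Polynomial.derivative P).eval a) = 0 →
        ∃ b : K, P.eval b = 0 ∧ 0 < v (b - a))
    -- s ∈ K with v s ∈ (Γ^{>0})' and s ∉ ∂𝔬
    (s : K) (hs : ∃ γ : Γ, 0 < γ ∧ v s = ((γ + ψ γ : Γ) : WithTop Γ))
    (hsnotint : ¬ ∃ ε : K, 0 < v ε ∧ d ε = s) :
    ∀ S : Set Γ,
      S = {γ : Γ | ∃ ε : K, 0 < v ε ∧ v (s - d ε) = (γ : WithTop Γ)} →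
      -- S ⊆ (Γ^{>0})'
      (S ⊆ {δ : Γ | ∃ β : Γ, 0 < β ∧ δ = β + ψ β}) ∧
      -- S has no largest element
      (¬ ∃ m ∈ S, ∀ x ∈ S, x ≤ m) ∧
      -- S is downward closed in (Γ^{>0})'
      (∀ γ ∈ S, ∀ δ : Γ, δ < γ → (∃ β : Γ, 0 < β ∧ δ = β + ψ β) → δ ∈ S) ∧
      -- in particular, S is convex
      (∀ a ∈ S, ∀ b ∈ S, ∀ c : Γ, a ≤ c → c ≤ b → c ∈ S) := by
  intro S hS
  have hv0' : v 0 = ⊤ := (hv0 0).mpr rfl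
  have hvne : ∀ x : K, x ≠ 0 → v x ≠ ⊤ := fun x hx h => hx ((hv0 x).mp h)
  have hd0 : d 0 = 0 := by
    have h := hd_add 0 0
    rw [add_zero] at h
    exact (add_eq_right.mp h.symm)
  have hvm1 : v (-1 : K) = 0 := by
    have h := hvmul (-1 : K) (-1)
    rw [neg_mul_neg, one_mul, hv1] at h
    cases hm : v (-1 : K) with
    | top => rw [hm] at h; simp at h
    | coe a =>
      rw [hm, ← WithTop.coe_add] at h
      have ha : a + a = 0 := by exact_mod_cast h.symm
      have ha0 : a = 0 := by
        rcases lt_trichotomy a 0 with hlt | he | hgt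
        · exact absurd ha (ne_of_lt (by simpa using add_lt_add hlt hlt))
        · exact he
        · exact absurd ha (ne_of_gt (by simpa using add_lt_add hgt hgt))
      exact_mod_cast ha0
  have hvneg : ∀ x : K, v (-x) = v x := by
    intro x
    have h := hvmul (-1) x
    rwa [neg_one_mul, hvm1, zero_add] at h
  have hvadd_eq : ∀ x y : K, v y < v x → v (x + y) = v y := by
    intro x y hlt
    have h1 : v y ≤ v (x + y) := by
      have h := hvadd x y
      rwa [min_eq_right hlt.le] at h
    have h2 : v (x + y) ≤ v y := by
      by_contra hc
      push_neg at hc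
      have h3 := hvadd (x + y) (-x)
      rw [hvneg] at h3
      have he : x + y + -x = y := by ring
      rw [he] at h3
      exact absurd h3 (not_le.mpr (lt_min hc hlt))
    exact le_antisymm h2 h1
  have hvsub_eq : ∀ x y : K, v y < v x → v (x - y) = v y := by
    intro x y hlt
    rw [sub_eq_add_neg, hvadd_eq x (-y) (by rwa [hvneg]), hvneg]
  have hwit : ∀ γ : Γ, ∃ g : K, g ≠ 0 ∧ v g = (γ : WithTop Γ) := by
    intro γ
    obtain ⟨g, hg⟩ := hvsurj γ
    refine ⟨g, fun h => ?_, hg⟩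
    rw [h, hv0'] at hg
    exact WithTop.top_ne_coe hg
  -- consequence of pre-dv: for v u ≥ 0, v (d u) > ψ α for all α > 0
  have hF3 : ∀ u : K, 0 ≤ v u → ∀ α : Γ, 0 < α → ((ψ α : Γ) : WithTop Γ) < v (d u) := by
    intro u hu α hα
    obtain ⟨g, hg0, hg⟩ := hwit α
    have hgpos : 0 < v g := by rw [hg]; exact_mod_cast hα
    have h := hpdv u g hg0 hu hgpos
    rw [hψ g α hα.ne' hg, hg, WithTop.coe_add] at h
    exact (WithTop.add_lt_add_iff_left WithTop.coe_ne_top).mp h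
  -- strict increase of α ↦ α + ψ α on Γ^{>0}
  have hF1 : ∀ β₀ β : Γ, 0 < β₀ → β₀ < β → β₀ + ψ β₀ < β + ψ β := by
    intro β₀ β h0 hlt
    obtain ⟨g0, hg00, hg0v⟩ := hwit β₀
    obtain ⟨g, hg0, hgv⟩ := hwit β
    have hp0 : 0 < v g0 := by rw [hg0v]; exact_mod_cast h0
    have hp : 0 < v g := by rw [hgv]; exact_mod_cast h0.trans hlt
    have h := (hasymp g g0 hg0 hg00 hp hp0).mp
      (by rw [hg0v, hgv]; exact_mod_cast hlt)
    rw [hψ g0 β₀ h0.ne' hg0v, hψ g β (h0.trans hlt).ne' hgv] at h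
    exact_mod_cast h
  -- upward closedness of (Γ^{>0})'
  have hF2 : ∀ β₀ c : Γ, 0 < β₀ → β₀ + ψ β₀ ≤ c → ∃ α : Γ, 0 < α ∧ α + ψ α = c := by
    intro β₀ c h0 hle
    set β := c - ψ β₀ with hβdef
    have hββ₀ : β₀ ≤ β := le_sub_iff_add_le.mpr hle
    have hβpos : 0 < β := lt_of_lt_of_le h0 hββ₀
    have hψβ : ψ β ≤ ψ β₀ := HC β₀ β h0 hββ₀
    rcases eq_or_lt_of_le hψβ with heq | hltψ
    · refine ⟨β, hβpos, ?_⟩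
      rw [heq, hβdef]
      abel
    · set r := ψ β₀ - ψ β with hrdef
      have hrpos : 0 < r := sub_pos.mpr hltψ
      have hβ₀β : β₀ < β := by
        rcases eq_or_lt_of_le hββ₀ with h | h
        · exact absurd (by rw [h]) (ne_of_lt hltψ)
        · exact h
      have hrβ : r < β := by
        have h := hF1 β₀ β h0 hβ₀β
        have h1 : r < β - β₀ := by
          rw [hrdef, sub_lt_sub_iff]
          rw [add_comm] at h
          exact h
        exact h1.trans (sub_lt_self β h0)
      have hψr : ψ β ≤ ψ r := HC r β hrpos hrβ.le
      obtain ⟨g, hg0, hgv⟩ := hwit β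
      obtain ⟨y, hy0, hyv⟩ := hwit r
      have hβr : v (g * y) = ((β + r : Γ) : WithTop Γ) := by
        rw [hvmul, hgv, hyv, WithTop.coe_add]
      have hβrpos : 0 < β + r := add_pos hβpos hrpos
      have hsum : β + ψ β + r = c := by rw [hβdef, hrdef]; abel
      have hdh : v (d (g * y)) = ((β + r + ψ (β + r) : Γ) : WithTop Γ) :=
        hψ (g * y) (β + r) hβrpos.ne' hβr
      have hdgv : v (d g) = ((β + ψ β : Γ) : WithTop Γ) := hψ g β hβpos.ne' hgv
      have hdyv : v (d y) = ((r + ψ r : Γ) : WithTop Γ) := hψ y r hrpos.ne' hyv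
      have hlow : (c : WithTop Γ) ≤ v (d (g * y)) := by
        rw [hd_mul]
        have h1 : v (d g * y) = ((β + ψ β + r : Γ) : WithTop Γ) := by
          rw [hvmul, hdgv, hyv, ← WithTop.coe_add]
        have h2 : v (g * d y) = ((β + (r + ψ r) : Γ) : WithTop Γ) := by
          rw [hvmul, hgv, hdyv, ← WithTop.coe_add]
        have hc1 : (c : WithTop Γ) ≤ v (d g * y) := by
          rw [h1]; exact_mod_cast le_of_eq hsum.symm
        have hc2' : c ≤ β + (r + ψ r) := by
          calc c = β + ψ β + r := hsum.symm
            _ = β + r + ψ β := by abel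
            _ ≤ β + r + ψ r := add_le_add_right hψr (β + r)
            _ = β + (r + ψ r) := by abel
        have hc2 : (c : WithTop Γ) ≤ v (g * d y) := by
          rw [h2]; exact_mod_cast hc2'
        exact le_trans (le_min hc1 hc2) (hvadd _ _)
      have hhigh : β + r + ψ (β + r) ≤ c := by
        calc β + r + ψ (β + r) ≤ β + r + ψ β :=
              add_le_add_right (HC β (β + r) hβpos (le_add_of_nonneg_right hrpos.le)) (β + r)
          _ = β + ψ β + r := by abel
          _ = c := hsum
      refine ⟨β + r, hβrpos, le_antisymm hhigh ?_⟩
      rw [hdh] at hlow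
      exact_mod_cast hlow
  -- the core step
  have hF4 : ∀ ε : K, 0 < v ε → ∀ δ : Γ, v (s - d ε) = (δ : WithTop Γ) →
      (∃ α : Γ, 0 < α ∧ δ = α + ψ α) ∧
      ∃ ε₂ : K, 0 < v ε₂ ∧ (δ : WithTop Γ) < v (s - d ε₂) := by
    intro ε hε δ hδ
    obtain ⟨γ, hγpos, hvs⟩ := hs
    have hmin : min (v s) (v (d ε)) ≤ (δ : WithTop Γ) := by
      have h := hvadd s (-(d ε))
      rw [hvneg, ← sub_eq_add_neg, hδ] at h
      exact h
    have hβ₀ex : ∃ β₀ : Γ, 0 < β₀ ∧ β₀ + ψ β₀ ≤ δ := by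
      rcases le_total (v s) (v (d ε)) with h | h
      · rw [min_eq_left h, hvs] at hmin
        exact ⟨γ, hγpos, by exact_mod_cast hmin⟩
      · rw [min_eq_right h] at hmin
        have hdεne : v (d ε) ≠ ⊤ := fun ht => by
          rw [ht] at hmin; exact WithTop.coe_ne_top (top_le_iff.mp hmin)
        have hεne : ε ≠ 0 := fun he => hdεne (by rw [he, hd0, hv0'])
        cases hvε : v ε with
        | top => exact absurd hvε (hvne ε hεne)
        | coe e =>
          have hepos : 0 < e := by rw [hvε] at hε; exact_mod_cast hε
          rw [hψ ε e hepos.ne' hvε] at hmin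
          exact ⟨e, hepos, by exact_mod_cast hmin⟩
    obtain ⟨β₀, hβ₀pos, hβ₀le⟩ := hβ₀ex
    set β := δ - ψ β₀ with hβdef
    have hββ₀ : β₀ ≤ β := le_sub_iff_add_le.mpr hβ₀le
    have hβpos : 0 < β := lt_of_lt_of_le hβ₀pos hββ₀
    have hψβ : ψ β ≤ ψ β₀ := HC β₀ β hβ₀pos hββ₀
    have hβψle : β + ψ β ≤ δ := by
      calc β + ψ β ≤ β + ψ β₀ := add_le_add_right hψβ β
        _ = δ := by rw [hβdef]; abel
    obtain ⟨g, hg0, hgv⟩ := hwit β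
    have hdgv : v (d g) = ((β + ψ β : Γ) : WithTop Γ) := hψ g β hβpos.ne' hgv
    have hdg0 : d g ≠ 0 := fun h => by
      rw [h, hv0'] at hdgv; exact WithTop.top_ne_coe hdgv
    set u := (s - d ε) / d g with hudef
    have hut : u * d g = s - d ε := div_mul_cancel₀ _ hdg0
    have hvu : v u = ((δ - (β + ψ β) : Γ) : WithTop Γ) := by
      have h := hvmul u (d g)
      rw [hut, hδ, hdgv] at h
      cases hu : v u with
      | top => rw [hu] at h; simp at h
      | coe a =>
        rw [hu, ← WithTop.coe_add] at h
        have h2 : δ = a + (β + ψ β) := by exact_mod_cast h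
        exact_mod_cast eq_sub_of_add_eq h2.symm
    have h0u : (0 : WithTop Γ) ≤ v u := by
      rw [hvu]
      exact_mod_cast sub_nonneg.mpr hβψle
    have hαpos : 0 < δ - ψ β :=
      sub_pos.mpr (lt_of_lt_of_le (lt_add_of_pos_left (ψ β) hβpos) hβψle)
    set ε₁ := u * g with hε₁def
    have hvε₁ : v ε₁ = ((δ - ψ β : Γ) : WithTop Γ) := by
      rw [hε₁def, hvmul, hvu, hgv, ← WithTop.coe_add]
      congr 1
      abel
    have hε₁pos : 0 < v ε₁ := by rw [hvε₁]; exact_mod_cast hαpos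
    by_cases hdu : d u = 0
    · exfalso
      apply hsnotint
      refine ⟨ε + ε₁, lt_of_lt_of_le (lt_min hε hε₁pos) (hvadd ε ε₁), ?_⟩
      rw [hd_add, hε₁def, hd_mul, hdu, zero_mul, zero_add, hut]
      ring
    · have hdu_lt : ((ψ β₀ : Γ) : WithTop Γ) < v (d u) := hF3 u h0u β₀ hβ₀pos
      have herr : (δ : WithTop Γ) < v (d u * g) := by
        rw [hvmul, hgv]
        have h1 : ((ψ β₀ : Γ) : WithTop Γ) + (β : WithTop Γ) < v (d u) + (β : WithTop Γ) :=
          (WithTop.add_lt_add_iff_right WithTop.coe_ne_top).mpr hdu_lt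
        have h2 : ((ψ β₀ : Γ) : WithTop Γ) + (β : WithTop Γ) = (δ : WithTop Γ) := by
          rw [← WithTop.coe_add]
          congr 1
          rw [hβdef]
          abel
        rwa [h2] at h1
      have hdε₁ : d ε₁ = d u * g + (s - d ε) := by
        rw [hε₁def, hd_mul, hut]
      constructor
      · have hvdε₁ : v (d ε₁) = (δ : WithTop Γ) := by
          rw [hdε₁, hvadd_eq (d u * g) (s - d ε) (by rw [hδ]; exact herr), hδ]
        have h := hψ ε₁ (δ - ψ β) hαpos.ne' hvε₁
        rw [hvdε₁] at h
        exact ⟨δ - ψ β, hαpos, by exact_mod_cast h⟩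
      · refine ⟨ε + ε₁, lt_of_lt_of_le (lt_min hε hε₁pos) (hvadd ε ε₁), ?_⟩
        have hkey : s - d (ε + ε₁) = -(d u * g) := by
          rw [hd_add, hdε₁]
          ring
        rw [hkey, hvneg]
        exact herr
  -- part 1 : S ⊆ (Γ^{>0})'
  have part1 : S ⊆ {δ : Γ | ∃ β : Γ, 0 < β ∧ δ = β + ψ β} := by
    intro γ' hγ'
    rw [hS] at hγ'
    obtain ⟨ε, hε, hv'⟩ := hγ'
    exact (hF4 ε hε γ' hv').1
  -- downward closedness
  have hdown : ∀ γ ∈ S, ∀ δ : Γ, δ < γ → (∃ β : Γ, 0 < β ∧ δ = β + ψ β) → δ ∈ S := by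
    intro γ' hγ' δ hδlt hδform
    obtain ⟨β, hβpos, hδeq⟩ := hδform
    rw [hS] at hγ' ⊢
    obtain ⟨ε, hε, hv'⟩ := hγ'
    obtain ⟨g, hg0, hgv⟩ := hwit β
    have hdgv : v (d g) = ((β + ψ β : Γ) : WithTop Γ) := hψ g β hβpos.ne' hgv
    refine ⟨ε + g, lt_of_lt_of_le (lt_min hε (by rw [hgv]; exact_mod_cast hβpos)) (hvadd ε g), ?_⟩
    have he : s - d (ε + g) = (s - d ε) - d g := by rw [hd_add]; ring
    have hlt : v (d g) < v (s - d ε) := by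
      rw [hv', hdgv]
      exact_mod_cast hδeq ▸ hδlt
    rw [he, hvsub_eq _ _ hlt, hdgv, ← hδeq]
  refine ⟨part1, ?_, hdown, ?_⟩
  · -- no largest element
    rintro ⟨m, hm, hmax⟩
    have hm' := hm
    rw [hS] at hm'
    obtain ⟨ε, hε, hv'⟩ := hm'
    obtain ⟨ε₂, hε₂, hgt⟩ := (hF4 ε hε m hv').2
    have hne : s - d ε₂ ≠ 0 := by
      intro h
      exact hsnotint ⟨ε₂, hε₂, (sub_eq_zero.mp h).symm⟩
    cases hv2 : v (s - d ε₂) with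
    | top => exact hvne _ hne hv2
    | coe δ' =>
      have hmem : δ' ∈ S := by rw [hS]; exact ⟨ε₂, hε₂, hv2⟩
      have h1 := hmax δ' hmem
      rw [hv2] at hgt
      exact absurd (WithTop.coe_lt_coe.mp hgt) (not_lt.mpr h1)
  · -- convexity
    intro a ha b hb c hac hcb
    rcases eq_or_lt_of_le hcb with rfl | hlt
    · exact hb
    · obtain ⟨α₀, hα₀pos, haeq⟩ := part1 ha
      obtain ⟨α, hαpos, hαeq⟩ := hF2 α₀ c hα₀pos (haeq ▸ hac)
      exact hdown b hb c hlt ⟨α, hαpos, hαeq.symm⟩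
end
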